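/- arXiv:2011.03855 — 4 statements merged into one kernel-verified Lean document; each statement's English description precedes it below -/
import Mathlib

section
/- Forward direction of the Ebenfelt–Khavinson–Shapiro theorem on fingerprints of polynomial lemniscates. Let n ≥ 1 and let P ∈ ℂ[X] be a polynomial of degree n whose leading coefficient is a positive real number, and set Γ = {z ∈ ℂ : |P(z)| = 1}. Suppose (φ₋, φ₊) is a conformal parametrization pair for Γ and every root of P lies in Ω₋ = φ₋(𝔻). Then there exist points a_1, …, a_n ∈ 𝔻 whose images φ₋(a_1), …, φ₋(a_n) are exactly the roots of P counted with multiplicity, and a constant λ ∈ ℂ with |λ| = 1, such that for all z, w ∈ ℂ with |z| = |w| = 1 and φ₊(w) = φ₋(z) one has wⁿ = λ·∏_{k=1}^n (z − a_k)/(1 − conj(a_k)·z); that is, the fingerprint k of Γ satisfies k(z)ⁿ = B(z), where B is the finite Blaschke product of degree n with zeros a_1, …, a_n. -/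
open Complex Metric Set Filter Polynomial Bornology
open scoped Topology

section EKSAux

/-- An injective holomorphic function on an open set has nonvanishing derivative. -/
lemma deriv_ne_zero_of_injOn {f : ℂ → ℂ} {s : Set ℂ} (hs : IsOpen s) {a : ℂ} (ha : a ∈ s)
    (hf : DifferentiableOn ℂ f s) (hinj : Set.InjOn f s) : deriv f a ≠ 0 := by
  intro hda
  set g : ℂ → ℂ := fun z => f z - f a with hgdef
  have hmem : ∀ᶠ z in 𝓝 a, z ∈ s := hs.mem_nhds ha
  have hga : AnalyticAt ℂ g a := (hf.analyticAt (hs.mem_nhds ha)).sub analyticAt_const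
  have hnotev : ¬ ∀ᶠ z in 𝓝 a, g z = 0 := by
    intro h
    have h2 : ∀ᶠ z in 𝓝[≠] a, (g z = 0 ∧ z ∈ s) ∧ z ∈ ({a}ᶜ : Set ℂ) :=
      ((h.and hmem).filter_mono nhdsWithin_le_nhds).and eventually_mem_nhdsWithin
    obtain ⟨z, ⟨hz0, hzs⟩, hzne⟩ := h2.exists
    exact hzne (hinj hzs ha (by simpa [hgdef, sub_eq_zero] using hz0))
  obtain ⟨m, gg, hgg, hgg0, hev⟩ := hga.exists_eventuallyEq_pow_smul_nonzero_iff.mpr hnotev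
  have hga0 : g a = 0 := by simp [hgdef]
  have hm0 : m ≠ 0 := by
    rintro rfl
    have := hev.self_of_nhds
    simp [hga0] at this
    exact hgg0 this.symm
  have hm1 : m ≠ 1 := by
    rintro rfl
    have hg' : HasDerivAt g (deriv f a) a :=
      ((hf.differentiableAt (hs.mem_nhds ha)).hasDerivAt).sub_const (f a)
    have hdg : deriv g a = 0 := by rw [hg'.deriv, hda]
    have heq : g =ᶠ[𝓝 a] fun z => (z - a) ^ 1 • gg z := hev
    have h1 : HasDerivAt (fun z => (z - a)) 1 a := (hasDerivAt_id a).sub_const a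
    have h2 : HasDerivAt gg (deriv gg a) a := hgg.differentiableAt.hasDerivAt
    have hdr : deriv (fun z => (z - a) * gg z) a = _ := (h1.mul h2).deriv
    rw [heq.deriv_eq] at hdg
    simp only [pow_one, smul_eq_mul] at hdg
    rw [hdr] at hdg
    simp at hdg
    exact hgg0 hdg
  have hmC : (m : ℂ) ≠ 0 := Nat.cast_ne_zero.mpr hm0
  set c : ℂ := gg a with hcdef
  set h : ℂ → ℂ := fun z => Complex.exp ((m : ℂ)⁻¹ * Complex.log (gg z / c)) *
    Complex.exp ((m : ℂ)⁻¹ * Complex.log c) with hhdef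
  set σ : ℂ → ℂ := fun z => (z - a) * h z with hσdef
  have hh_ne : ∀ z, h z ≠ 0 := fun z => mul_ne_zero (Complex.exp_ne_zero _) (Complex.exp_ne_zero _)
  have hσa : σ a = 0 := by simp [hσdef]
  have hσ_an : AnalyticAt ℂ σ a := by
    apply (analyticAt_id.sub analyticAt_const).mul
    apply AnalyticAt.mul _ analyticAt_const
    apply AnalyticAt.cexp
    apply analyticAt_const.mul
    apply AnalyticAt.clog (hgg.div analyticAt_const hgg0)
    have hgg0' : gg a ≠ 0 := hgg0
    simp [hcdef, div_self hgg0', Complex.one_mem_slitPlane]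
  have hggne : ∀ᶠ z in 𝓝 a, gg z ≠ 0 := hgg.continuousAt.eventually_ne hgg0
  have hevσ : ∀ᶠ z in 𝓝 a, g z = σ z ^ m := by
    filter_upwards [hev, hggne] with z hz hzne
    have hpow : h z ^ m = gg z := by
      rw [hhdef]
      simp only [mul_pow, ← Complex.exp_nat_mul]
      rw [mul_inv_cancel_left₀ hmC, mul_inv_cancel_left₀ hmC,
        Complex.exp_log (div_ne_zero hzne hgg0), Complex.exp_log hgg0,
        div_mul_cancel₀ _ hgg0]
    rw [hz, hσdef]
    simp only [mul_pow, hpow, smul_eq_mul]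
  have hmap : 𝓝 (0 : ℂ) ≤ Filter.map σ (𝓝 a) := by
    rcases hσ_an.eventually_constant_or_nhds_le_map_nhds with hconst | hle
    · exfalso
      have h2 : ∀ᶠ z in 𝓝[≠] a, σ z = σ a ∧ z ∈ ({a}ᶜ : Set ℂ) :=
        (hconst.filter_mono nhdsWithin_le_nhds).and eventually_mem_nhdsWithin
      obtain ⟨z, hz, hzne⟩ := h2.exists
      rw [hσa] at hz
      rcases mul_eq_zero.mp hz with h' | h'
      · exact hzne (sub_eq_zero.mp h')
      · exact hh_ne z h'
    · rwa [hσa] at hle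
  obtain ⟨U, hU, hUprop⟩ := Filter.eventually_iff_exists_mem.mp (hevσ.and hmem)
  have himg : σ '' U ∈ 𝓝 (0 : ℂ) := hmap (Filter.image_mem_map hU)
  obtain ⟨ε, hε, hball⟩ := Metric.mem_nhds_iff.mp himg
  have hprim := Complex.isPrimitiveRoot_exp m hm0
  set ζ : ℂ := Complex.exp (2 * Real.pi * Complex.I / m) with hζdef
  have hζm : ζ ^ m = 1 := hprim.pow_eq_one
  have hζ1 : ζ ≠ 1 := hprim.ne_one (by omega)
  have hζnorm : ‖ζ‖ = 1 := Complex.norm_eq_one_of_pow_eq_one hζm hm0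
  set v : ℂ := ((ε / 2 : ℝ) : ℂ) with hvdef
  have hv0 : v ≠ 0 := by
    simp only [hvdef, ne_eq, Complex.ofReal_eq_zero]
    positivity
  have hvmem : v ∈ ball (0 : ℂ) ε := by
    simp only [mem_ball, dist_zero_right, hvdef, Complex.norm_real, Real.norm_eq_abs]
    rw [abs_of_pos (by positivity)]
    linarith
  have hζvmem : ζ * v ∈ ball (0 : ℂ) ε := by
    simp only [mem_ball, dist_zero_right, norm_mul, hζnorm, one_mul] at hvmem ⊢
    exact hvmem
  obtain ⟨z₁, hz₁U, hz₁⟩ := hball hvmem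
  obtain ⟨z₂, hz₂U, hz₂⟩ := hball hζvmem
  have hzne : z₁ ≠ z₂ := by
    intro hzz
    rw [hzz, hz₂] at hz₁
    exact hζ1 (by field_simp at hz₁; tauto)
  have hfz : f z₁ = f z₂ := by
    have e1 := (hUprop z₁ hz₁U).1
    have e2 := (hUprop z₂ hz₂U).1
    rw [hz₁] at e1
    rw [hz₂] at e2
    have hgz : g z₁ = g z₂ := by rw [e1, e2, mul_pow, hζm, one_mul]
    simpa [hgdef, sub_left_inj] using hgz
  exact hzne (hinj (hUprop z₁ hz₁U).2 (hUprop z₂ hz₂U).2 hfz)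

/-- A nonvanishing holomorphic function on the disk, continuous up to the boundary,
with unimodular boundary values, is a unimodular constant. -/
lemma eq_const_of_unimodular_boundary {F : ℂ → ℂ}
    (hd : DifferentiableOn ℂ F (ball 0 1))
    (hc : ContinuousOn F (closedBall 0 1))
    (h0 : ∀ z ∈ closedBall (0:ℂ) 1, F z ≠ 0)
    (hb : ∀ z ∈ sphere (0:ℂ) 1, ‖F z‖ = 1) :
    ∀ z ∈ closedBall (0:ℂ) 1, F z = F 0 := by
  have hcl : closure (ball (0:ℂ) 1) = closedBall 0 1 := closure_ball 0 one_ne_zero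
  have hfr : frontier (ball (0:ℂ) 1) = sphere 0 1 := frontier_ball 0 one_ne_zero
  have hdc : DiffContOnCl ℂ F (ball 0 1) := ⟨hd, by rwa [hcl]⟩
  have hbd : Bornology.IsBounded (ball (0:ℂ) 1) := isBounded_ball
  -- |F| ≤ 1 on the closed ball
  have hle : ∀ z ∈ closedBall (0:ℂ) 1, ‖F z‖ ≤ 1 := by
    intro z hz
    refine Complex.norm_le_of_forall_mem_frontier_norm_le hbd hdc ?_ (by rwa [hcl]) 
    intro w hw
    rw [hfr] at hw
    exact le_of_eq (hb w hw)
  -- |1/F| ≤ 1 on the closed ball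
  have hinv : DiffContOnCl ℂ (fun z => (F z)⁻¹) (ball 0 1) := by
    refine ⟨hd.inv (fun z hz => h0 z (ball_subset_closedBall hz)), ?_⟩
    rw [hcl]
    exact hc.inv₀ h0
  have hge : ∀ z ∈ closedBall (0:ℂ) 1, 1 ≤ ‖F z‖ := by
    intro z hz
    have hfb : ∀ w ∈ frontier (ball (0:ℂ) 1), ‖(F w)⁻¹‖ ≤ 1 := by
      intro w hw
      rw [hfr] at hw
      rw [norm_inv, hb w hw]
      norm_num
    have := Complex.norm_le_of_forall_mem_frontier_norm_le hbd hinv hfb (by rwa [hcl])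
    rw [norm_inv, inv_le_one_iff₀] at this
    rcases this with h | h
    · exact absurd (norm_eq_zero.mp (le_antisymm h (norm_nonneg _))) (h0 z hz)
    · exact h
  have heq : ∀ z ∈ closedBall (0:ℂ) 1, ‖F z‖ = 1 := fun z hz =>
    le_antisymm (hle z hz) (hge z hz)
  -- maximum modulus: F is constant
  have hmax : IsMaxOn (norm ∘ F) (ball 0 1) 0 := by
    intro z hz
    simp only [Function.comp_apply, mem_setOf_eq]
    rw [heq z (ball_subset_closedBall hz), heq 0 (by simp)]
  have := Complex.eqOn_closure_of_isPreconnected_of_isMaxOn_norm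
    (convex_ball (0:ℂ) 1).isPreconnected isOpen_ball hdc (by simp) hmax
  rw [hcl] at this
  intro z hz
  exact this hz

lemma poly_div_pow_tendsto (P : ℂ[X]) {n : ℕ} (hdeg : P.natDegree = n) :
    Filter.Tendsto (fun z => P.eval z * (z ^ n)⁻¹) (Bornology.cobounded ℂ)
      (𝓝 P.leadingCoeff) := by
  have hz1 : ∀ᶠ z : ℂ in Bornology.cobounded ℂ, 1 ≤ ‖z‖ := eventually_cobounded_le_norm 1
  have hnorm : Tendsto (fun z : ℂ => ‖z‖) (Bornology.cobounded ℂ) atTop :=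
    tendsto_norm_cobounded_atTop
  have key : ∀ᶠ z : ℂ in Bornology.cobounded ℂ,
      P.eval z * (z ^ n)⁻¹ = ∑ i ∈ Finset.range (n + 1), P.coeff i * (z ^ (n - i))⁻¹ := by
    filter_upwards [hz1] with z hz
    have hz0 : z ≠ 0 := by
      intro h; rw [h] at hz; norm_num at hz
    rw [eval_eq_sum_range, hdeg, Finset.sum_mul]
    apply Finset.sum_congr rfl
    intro i hi
    have hin : i ≤ n := Nat.lt_succ_iff.mp (Finset.mem_range.mp hi)
    have : z ^ n = z ^ i * z ^ (n - i) := by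
      rw [← pow_add, Nat.add_sub_cancel' hin]
    rw [this, mul_inv, mul_assoc, ← mul_assoc (z ^ i), mul_inv_cancel₀ (pow_ne_zero _ hz0),
      one_mul]
  have hsum : Tendsto (fun z : ℂ => ∑ i ∈ Finset.range (n + 1), P.coeff i * (z ^ (n - i))⁻¹)
      (Bornology.cobounded ℂ)
      (𝓝 (∑ i ∈ Finset.range (n + 1), if i = n then P.leadingCoeff else 0)) := by
    apply tendsto_finset_sum
    intro i hi
    by_cases h : i = n
    · subst h
      simp only [Nat.sub_self, pow_zero, inv_one, mul_one, if_true]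
      rw [← hdeg, ← Polynomial.coeff_natDegree]
      exact tendsto_const_nhds
    · simp only [if_neg h]
      have hpos : 0 < n - i := by
        have := Nat.lt_succ_iff.mp (Finset.mem_range.mp hi)
        omega
      have h1 : Tendsto (fun z : ℂ => (z ^ (n - i))⁻¹) (Bornology.cobounded ℂ) (𝓝 0) := by
        rw [tendsto_zero_iff_norm_tendsto_zero]
        simp only [norm_inv, norm_pow]
        exact (tendsto_pow_atTop hpos.ne').comp hnorm |>.inv_tendsto_atTop
      simpa using h1.const_mul (P.coeff i)
  have hfin : (∑ i ∈ Finset.range (n + 1), if i = n then P.leadingCoeff else 0)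
      = P.leadingCoeff := by
    rw [Finset.sum_ite_eq' (Finset.range (n + 1)) n (fun _ => P.leadingCoeff)]
    simp
  rw [hfin] at hsum
  exact hsum.congr' (key.mono fun z hz => hz.symm)

lemma continuousOn_dslope_closedBall {f : ℂ → ℂ} {c : ℂ} (hc : c ∈ ball (0:ℂ) 1)
    (hcont : ContinuousOn f (closedBall 0 1)) (hdiff : DifferentiableOn ℂ f (ball 0 1)) :
    ContinuousOn (dslope f c) (closedBall 0 1) := by
  intro z hz
  rcases eq_or_ne z c with heq | hne
  · subst heq
    have hd : DifferentiableOn ℂ (dslope f z) (ball 0 1) :=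
      (differentiableOn_dslope (isOpen_ball.mem_nhds hc)).mpr hdiff
    exact ((hd z hc).differentiableAt
      (isOpen_ball.mem_nhds hc)).continuousAt.continuousWithinAt
  · have hcw : ContinuousWithinAt (fun w => (f w - f c) / (w - c)) (closedBall 0 1) z := by
      apply ContinuousWithinAt.div
      · exact (hcont z hz).sub continuousWithinAt_const
      · exact continuousWithinAt_id.sub continuousWithinAt_const
      · exact sub_ne_zero.mpr hne
    apply hcw.congr_of_eventuallyEq ?_ ?_
    · have hop : ∀ᶠ w in 𝓝[closedBall (0:ℂ) 1] z, w ≠ c := by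
        apply eventually_nhdsWithin_of_eventually_nhds
        exact (isOpen_compl_singleton.eventually_mem (by simpa using hne))
      filter_upwards [hop] with w hw
      rw [dslope_of_ne f hw, slope_def_field]
    · rw [dslope_of_ne f hne, slope_def_field]

lemma blaschke_boundary (a z : ℂ) (hz : ‖z‖ = 1) :
    ‖(1:ℂ) - (starRingEnd ℂ) a * z‖ = ‖z - a‖ := by
  have hzz : (starRingEnd ℂ) z * z = 1 := by
    rw [Complex.conj_mul']
    norm_cast
    rw [hz]
    norm_num
  have h1 : (starRingEnd ℂ) z * ((1:ℂ) - (starRingEnd ℂ) a * z) = (starRingEnd ℂ) (z - a) := by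
    rw [map_sub, mul_sub, mul_one]
    congr 1
    rw [mul_comm ((starRingEnd ℂ) a) z, ← mul_assoc, hzz, one_mul]
  have h2 : ‖(starRingEnd ℂ) z * ((1:ℂ) - (starRingEnd ℂ) a * z)‖ = ‖z - a‖ := by
    rw [h1, RCLike.norm_conj]
  rw [norm_mul, RCLike.norm_conj, hz, one_mul] at h2
  exact h2

lemma multiset_exists_enum {α : Type*} (A : Multiset α) {n : ℕ} (h : Multiset.card A = n) :
    ∃ a : Fin n → α, Finset.univ.val.map a = A := by
  induction A using Quotient.inductionOn with
  | h l =>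
    rw [Multiset.quot_mk_to_coe, Multiset.coe_card] at h
    subst h
    exact ⟨l.get, by rw [Fin.univ_val_map, List.ofFn_get]; rfl⟩

lemma interior_blaschke {φm : ℂ → ℂ} (contm : ContinuousOn φm (closedBall 0 1))
    (injm : Set.InjOn φm (closedBall 0 1)) (holm : DifferentiableOn ℂ φm (ball 0 1))
    {n : ℕ} {a : Fin n → ℂ} (hball : ∀ k, a k ∈ ball (0:ℂ) 1) {cc : ℂ} (hcc : cc ≠ 0)
    {p : ℂ → ℂ} (hp : ∀ x : ℂ, p x = cc * ∏ k, (x - φm (a k)))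
    (hbnd : ∀ z ∈ sphere (0:ℂ) 1, ‖p (φm z)‖ = 1) :
    ∃ lam : ℂ, ‖lam‖ = 1 ∧ ∀ z ∈ closedBall (0:ℂ) 1,
      p (φm z) = lam * ∏ k, (z - a k) / (1 - (starRingEnd ℂ) (a k) * z) := by
  have hne_den : ∀ (k : Fin n), ∀ z ∈ closedBall (0:ℂ) 1,
      (1:ℂ) - (starRingEnd ℂ) (a k) * z ≠ 0 := by
    intro k z hz
    intro h
    have h1 : ‖(starRingEnd ℂ) (a k) * z‖ < 1 := by
      rw [norm_mul, RCLike.norm_conj]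
      have ha := mem_ball_zero_iff.mp (hball k)
      have hz' := mem_closedBall_zero_iff.mp hz
      calc ‖a k‖ * ‖z‖ ≤ ‖a k‖ * 1 := by
            apply mul_le_mul_of_nonneg_left hz' (norm_nonneg _)
        _ < 1 := by rwa [mul_one]
    rw [sub_eq_zero] at h
    rw [← h] at h1
    norm_num at h1
  set F : ℂ → ℂ := fun z => cc * (∏ k, dslope φm (a k) z) *
    ∏ k, ((1:ℂ) - (starRingEnd ℂ) (a k) * z) with hFdef
  have hfact : ∀ z : ℂ, p (φm z) = cc * ∏ k, ((z - a k) * dslope φm (a k) z) := by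
    intro z
    rw [hp (φm z)]
    congr 1
    apply Finset.prod_congr rfl
    intro k _
    rw [← sub_smul_dslope φm (a k) z, smul_eq_mul]
  have hds_ne : ∀ (k : Fin n), ∀ z ∈ closedBall (0:ℂ) 1, dslope φm (a k) z ≠ 0 := by
    intro k z hz
    rcases eq_or_ne z (a k) with heq | hne
    · subst heq
      rw [dslope_same]
      exact deriv_ne_zero_of_injOn isOpen_ball (hball k) holm
        (injm.mono ball_subset_closedBall)
    · rw [dslope_of_ne φm hne, slope_def_field]
      apply div_ne_zero
      · rw [sub_ne_zero]
        intro h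
        exact hne (injm hz (ball_subset_closedBall (hball k)) h)
      · rwa [sub_ne_zero]
  have hFB : ∀ z ∈ closedBall (0:ℂ) 1,
      F z * ∏ k, (z - a k) / (1 - (starRingEnd ℂ) (a k) * z) = p (φm z) := by
    intro z hz
    rw [hfact z, hFdef]
    have key : (∏ k, dslope φm (a k) z) * ((∏ k, ((1:ℂ) - (starRingEnd ℂ) (a k) * z)) *
        ∏ k, (z - a k) / (1 - (starRingEnd ℂ) (a k) * z))
        = ∏ k, ((z - a k) * dslope φm (a k) z) := by
      rw [← Finset.prod_mul_distrib, ← Finset.prod_mul_distrib]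
      apply Finset.prod_congr rfl
      intro k _
      field_simp [hne_den k z hz]
    rw [mul_assoc, mul_assoc, key]
  have hFd : DifferentiableOn ℂ F (ball 0 1) := by
    apply DifferentiableOn.mul
    · apply DifferentiableOn.mul (differentiableOn_const cc)
      exact DifferentiableOn.fun_finsetProd fun k _ =>
        (differentiableOn_dslope (isOpen_ball.mem_nhds (hball k))).mpr holm
    · exact DifferentiableOn.fun_finsetProd fun k _ =>
        (differentiableOn_const 1).sub (differentiableOn_id.const_mul _)
  have hFc : ContinuousOn F (closedBall 0 1) := by
    apply ContinuousOn.mul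
    · apply ContinuousOn.mul continuousOn_const
      exact continuousOn_finset_prod _ fun k _ =>
        continuousOn_dslope_closedBall (hball k) contm holm
    · exact continuousOn_finset_prod _ fun k _ =>
        continuousOn_const.sub (continuousOn_const.mul continuousOn_id)
  have hF0 : ∀ z ∈ closedBall (0:ℂ) 1, F z ≠ 0 := by
    intro z hz
    apply mul_ne_zero
    · exact mul_ne_zero hcc (Finset.prod_ne_zero_iff.mpr fun k _ => hds_ne k z hz)
    · exact Finset.prod_ne_zero_iff.mpr fun k _ => hne_den k z hz
  have hBnorm : ∀ z ∈ sphere (0:ℂ) 1,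
      ‖∏ k, (z - a k) / (1 - (starRingEnd ℂ) (a k) * z)‖ = 1 := by
    intro z hz
    have hz1 : ‖z‖ = 1 := by simpa using hz
    rw [norm_prod]
    apply Finset.prod_eq_one
    intro k _
    rw [norm_div, blaschke_boundary (a k) z hz1]
    apply div_self
    rw [← blaschke_boundary (a k) z hz1]
    rw [norm_ne_zero_iff]
    exact hne_den k z (sphere_subset_closedBall hz)
  have hFb : ∀ z ∈ sphere (0:ℂ) 1, ‖F z‖ = 1 := by
    intro z hz
    have h1 := hFB z (sphere_subset_closedBall hz)
    have h2 := congrArg norm h1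
    rw [norm_mul, hBnorm z hz, mul_one, hbnd z hz] at h2
    exact h2
  have hconst := eq_const_of_unimodular_boundary hFd hFc hF0 hFb
  refine ⟨F 0, ?_, ?_⟩
  · have h1 : (1:ℂ) ∈ sphere (0:ℂ) 1 := by simp
    rw [← hconst 1 (sphere_subset_closedBall h1)]
    exact hFb 1 h1
  · intro z hz
    rw [← hFB z hz, hconst z hz]

lemma exterior_power {φp : ℂ → ℂ} (contp : ContinuousOn φp {w : ℂ | 1 ≤ ‖w‖})
    (holp : DifferentiableOn ℂ φp {w : ℂ | 1 < ‖w‖})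
    {d : ℝ} (hd : 0 < d)
    (htend : Tendsto (fun w => φp w / w) (Bornology.cobounded ℂ) (𝓝 (d:ℂ)))
    {n : ℕ} (hn : 1 ≤ n) (P : ℂ[X]) (hdeg : P.natDegree = n)
    (hnz : ∀ w : ℂ, 1 ≤ ‖w‖ → P.eval (φp w) ≠ 0)
    (hbnd : ∀ w : ℂ, ‖w‖ = 1 → ‖P.eval (φp w)‖ = 1) :
    ∃ mu : ℂ, ‖mu‖ = 1 ∧ ∀ w : ℂ, ‖w‖ = 1 → P.eval (φp w) = mu * w ^ n := by
  have hP0 : P ≠ 0 := by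
    intro h; rw [h, natDegree_zero] at hdeg; omega
  have hc0 : P.leadingCoeff ≠ 0 := leadingCoeff_ne_zero.mpr hP0
  -- φp tends to infinity
  have hφnorm : Tendsto (fun w => ‖φp w‖) (cobounded ℂ) atTop := by
    have hev : ∀ᶠ w : ℂ in cobounded ℂ, d / 2 * ‖w‖ ≤ ‖φp w‖ := by
      have h1 : ∀ᶠ w : ℂ in cobounded ℂ, d / 2 < ‖φp w / w‖ := by
        have : ∀ᶠ x : ℂ in 𝓝 (d:ℂ), d / 2 < ‖x‖ := by
          apply ContinuousAt.eventually_lt (f := fun _ : ℂ => d / 2) (g := fun x : ℂ => ‖x‖)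
          · exact continuousAt_const
          · exact continuous_norm.continuousAt
          · simp [Complex.norm_real, abs_of_pos hd]
            linarith
        exact htend.eventually this
      filter_upwards [h1, eventually_cobounded_le_norm (1:ℝ)] with w hw hw1
      have hwne : w ≠ 0 := by
        intro h; rw [h] at hw1; norm_num at hw1
      rw [norm_div, lt_div_iff₀ (norm_pos_iff.mpr hwne)] at hw
      exact hw.le
    apply tendsto_atTop_mono' _ hev
    exact (tendsto_norm_cobounded_atTop.const_mul_atTop (by linarith : (0:ℝ) < d / 2))
  have hφcob : Tendsto φp (cobounded ℂ) (cobounded ℂ) :=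
    tendsto_norm_atTop_iff_cobounded.mp hφnorm
  -- the limit of q at 0
  set mu0 : ℂ := P.leadingCoeff * (d:ℂ) ^ n with hmu0def
  have hmu0 : mu0 ≠ 0 := by
    apply mul_ne_zero hc0
    apply pow_ne_zero
    simpa using hd.ne'
  set q : ℂ → ℂ := fun u => P.eval (φp u⁻¹) * u ^ n with hqdef
  have hinv : Tendsto (fun u : ℂ => u⁻¹) (𝓝[≠] (0:ℂ)) (cobounded ℂ) :=
    tendsto_inv₀_nhdsNE_zero
  have htendq : Tendsto q (𝓝[≠] (0:ℂ)) (𝓝 mu0) := by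
    have hA : Tendsto (fun u : ℂ => P.eval (φp u⁻¹) * ((φp u⁻¹) ^ n)⁻¹) (𝓝[≠] (0:ℂ))
        (𝓝 P.leadingCoeff) := (poly_div_pow_tendsto P hdeg).comp (hφcob.comp hinv)
    have hB : Tendsto (fun u : ℂ => (φp u⁻¹ / u⁻¹) ^ n) (𝓝[≠] (0:ℂ)) (𝓝 ((d:ℂ) ^ n)) :=
      (htend.comp hinv).pow n
    have hAB := hA.mul hB
    apply hAB.congr'
    have hφbig : ∀ᶠ u : ℂ in 𝓝[≠] (0:ℂ), 1 ≤ ‖φp u⁻¹‖ :=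
      (hφnorm.comp hinv).eventually_ge_atTop 1
    filter_upwards [hφbig, self_mem_nhdsWithin] with u hu hune
    have hune' : u ≠ 0 := hune
    have hφne : φp u⁻¹ ≠ 0 := by
      intro h; rw [h] at hu; norm_num at hu
    rw [hqdef]
    simp only
    rw [div_pow, div_eq_mul_inv, inv_pow, inv_inv]
    field_simp
  -- q is differentiable/continuous away from 0
  have hmaps1 : MapsTo (fun u : ℂ => u⁻¹) (ball 0 1 \ {0}) {w : ℂ | 1 < ‖w‖} := by
    intro u hu
    have h1 : ‖u‖ < 1 := mem_ball_zero_iff.mp hu.1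
    have h2 : u ≠ 0 := hu.2
    simp only [mem_setOf_eq, norm_inv]
    rw [lt_inv_comm₀ one_pos (norm_pos_iff.mpr h2)]
    simpa using h1
  have hmaps2 : MapsTo (fun u : ℂ => u⁻¹) (closedBall 0 1 \ {0}) {w : ℂ | 1 ≤ ‖w‖} := by
    intro u hu
    have h1 : ‖u‖ ≤ 1 := mem_closedBall_zero_iff.mp hu.1
    have h2 : u ≠ 0 := hu.2
    simp only [mem_setOf_eq, norm_inv]
    rw [le_inv_comm₀ one_pos (norm_pos_iff.mpr h2)]
    simpa using h1
  have hq_diff : DifferentiableOn ℂ q (ball 0 1 \ {0}) := by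
    apply DifferentiableOn.mul
    · apply (P.differentiable.comp_differentiableOn)
      apply holp.comp _ hmaps1
      intro u hu
      exact (differentiableAt_inv hu.2).differentiableWithinAt
    · exact (differentiable_pow n).differentiableOn
  have hq_cont : ContinuousOn q (closedBall 0 1 \ {0}) := by
    apply ContinuousOn.mul
    · have h1 : ContinuousOn (fun u : ℂ => u⁻¹) (closedBall 0 1 \ {0}) :=
        fun u hu => (continuousAt_inv₀ hu.2).continuousWithinAt
      have h2 : ContinuousOn (fun u : ℂ => φp u⁻¹) (closedBall 0 1 \ {0}) :=
        contp.comp h1 hmaps2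
      exact P.continuous.comp_continuousOn h2
    · exact (continuous_pow n).continuousOn
  -- removable singularity at 0
  have hq_bdd : ∃ δ : ℝ, 0 < δ ∧ δ ≤ 1 ∧ ∀ u ∈ ball (0:ℂ) δ \ {0}, ‖q u‖ ≤ ‖mu0‖ + 1 := by
    have hev : ∀ᶠ u in 𝓝[≠] (0:ℂ), ‖q u‖ ≤ ‖mu0‖ + 1 :=
      htendq.norm.eventually (eventually_le_nhds (lt_add_one ‖mu0‖))
    rw [eventually_nhdsWithin_iff] at hev
    obtain ⟨δ, hδ, hδs⟩ := Metric.eventually_nhds_iff_ball.mp hev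
    refine ⟨min δ 1, lt_min hδ one_pos, min_le_right _ _, ?_⟩
    intro u hu
    exact hδs u (ball_subset_ball (min_le_left _ _) hu.1) hu.2
  obtain ⟨δ, hδ0, hδ1, hδbd⟩ := hq_bdd
  set G : ℂ → ℂ := Function.update q 0 mu0 with hGdef
  have hGsmall : DifferentiableOn ℂ G (ball 0 δ) := by
    have hmem0 : ball (0:ℂ) δ ∈ 𝓝 (0:ℂ) := ball_mem_nhds 0 hδ0
    have hsub : ball (0:ℂ) δ \ {0} ⊆ ball 0 1 \ {0} :=
      diff_subset_diff (ball_subset_ball hδ1) Subset.rfl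
    have hdiff := hq_diff.mono hsub
    have hbdd : BddAbove (norm ∘ q '' (ball (0:ℂ) δ \ {0})) := by
      refine ⟨‖mu0‖ + 1, ?_⟩
      rintro x ⟨u, hu, rfl⟩
      exact hδbd u hu
    have hupd := Complex.differentiableOn_update_limUnder_of_bddAbove hmem0 hdiff hbdd
    rwa [htendq.limUnder_eq] at hupd
  have hGdiff : DifferentiableOn ℂ G (ball 0 1) := by
    intro z hz
    rcases eq_or_ne z 0 with rfl | hzne
    · exact ((hGsmall 0 (mem_ball_self hδ0)).differentiableAt
        (isOpen_ball.mem_nhds (mem_ball_self hδ0))).differentiableWithinAt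
    · have hopen : IsOpen (ball (0:ℂ) 1 \ {0}) := isOpen_ball.sdiff isClosed_singleton
      have hzmem : z ∈ ball (0:ℂ) 1 \ {0} := ⟨hz, hzne⟩
      have hqat : DifferentiableAt ℂ q z :=
        (hq_diff z hzmem).differentiableAt (hopen.mem_nhds hzmem)
      have heq : G =ᶠ[𝓝 z] q := by
        filter_upwards [isOpen_compl_singleton.eventually_mem hzne] with w hw
        exact Function.update_of_ne hw mu0 q
      exact (hqat.congr_of_eventuallyEq heq).differentiableWithinAt
  have hGcont : ContinuousOn G (closedBall 0 1) := by
    intro z hz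
    rcases eq_or_ne z 0 with rfl | hzne
    · exact ((hGsmall 0 (mem_ball_self hδ0)).differentiableAt
        (isOpen_ball.mem_nhds (mem_ball_self hδ0))).continuousAt.continuousWithinAt
    · have hcw : ContinuousWithinAt q (closedBall 0 1 \ {0}) z := hq_cont z ⟨hz, hzne⟩
      have hcw2 : ContinuousWithinAt q (closedBall 0 1) z := by
        apply hcw.mono_of_mem_nhdsWithin
        rw [diff_eq]
        exact inter_mem self_mem_nhdsWithin
          (mem_nhdsWithin_of_mem_nhds (isOpen_compl_singleton.mem_nhds hzne))
      apply hcw2.congr_of_eventuallyEq ?_ (Function.update_of_ne hzne mu0 q)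
      filter_upwards [eventually_nhdsWithin_of_eventually_nhds
        (isOpen_compl_singleton.eventually_mem hzne)] with w hw
      exact Function.update_of_ne hw mu0 q
  have hGb : ∀ z ∈ sphere (0:ℂ) 1, ‖G z‖ = 1 := by
    intro z hz
    have hz1 : ‖z‖ = 1 := by simpa using hz
    have hzne : z ≠ 0 := by intro h; rw [h] at hz1; norm_num at hz1
    rw [hGdef, Function.update_of_ne hzne]
    have hinv1 : ‖z⁻¹‖ = 1 := by rw [norm_inv, hz1]; norm_num
    rw [hqdef]
    simp only
    rw [norm_mul, norm_pow, hz1, one_pow, mul_one, hbnd _ hinv1]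
  have hG0 : ∀ z ∈ closedBall (0:ℂ) 1, G z ≠ 0 := by
    intro z hz
    rcases eq_or_ne z 0 with rfl | hzne
    · rw [hGdef, Function.update_self]; exact hmu0
    · rw [hGdef, Function.update_of_ne hzne]
      apply mul_ne_zero
      · exact hnz _ (hmaps2 ⟨hz, hzne⟩)
      · exact pow_ne_zero n hzne
  have hconst := eq_const_of_unimodular_boundary hGdiff hGcont hG0 hGb
  have hG0val : G 0 = mu0 := Function.update_self 0 mu0 q
  refine ⟨mu0, ?_, ?_⟩
  · have h1 : (1:ℂ) ∈ sphere (0:ℂ) 1 := by simp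
    rw [← hG0val, ← hconst 1 (sphere_subset_closedBall h1)]
    exact hGb 1 h1
  · intro w hw
    have hwne : w ≠ 0 := by intro h; rw [h] at hw; norm_num at hw
    have hu : w⁻¹ ∈ closedBall (0:ℂ) 1 := by
      rw [mem_closedBall_zero_iff, norm_inv, hw]; norm_num
    have hval := hconst w⁻¹ hu
    rw [hG0val, hGdef, Function.update_of_ne (inv_ne_zero hwne)] at hval
    rw [hqdef] at hval
    simp only [inv_inv] at hval
    have hwn : (w:ℂ)^n ≠ 0 := pow_ne_zero n hwne
    rw [inv_pow, ← div_eq_mul_inv, div_eq_iff hwn] at hval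
    exact hval

end EKSAux

/-- A conformal parametrization pair for a Jordan curve `Γ ⊂ ℂ`:
`φm` maps the closed unit disk onto the closure of the bounded complementary
component (conformally inside), `φp` maps the closed exterior of the unit disk
onto the closure of the unbounded component, normalized at infinity. -/
structure ConformalPair (Γ : Set ℂ) (φm φp : ℂ → ℂ) : Prop where
  contm : ContinuousOn φm (closedBall 0 1)
  injm : InjOn φm (closedBall 0 1)
  holm : DifferentiableOn ℂ φm (ball 0 1)
  mapm : φm '' (sphere 0 1) = Γ
  contp : ContinuousOn φp {w : ℂ | 1 ≤ ‖w‖}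
  injp : InjOn φp {w : ℂ | 1 ≤ ‖w‖}
  holp : DifferentiableOn ℂ φp {w : ℂ | 1 < ‖w‖}
  mapp : φp '' (sphere 0 1) = Γ
  deriv_infty : ∃ d : ℝ, 0 < d ∧
    Filter.Tendsto (fun w => φp w / w) (Bornology.cobounded ℂ) (nhds (d : ℂ))
  disj_mp : Disjoint (φm '' ball 0 1) (φp '' {w : ℂ | 1 < ‖w‖})
  disj_mG : Disjoint (φm '' ball 0 1) Γ
  disj_pG : Disjoint (φp '' {w : ℂ | 1 < ‖w‖}) Γ
  union_eq : φm '' ball 0 1 ∪ Γ ∪ φp '' {w : ℂ | 1 < ‖w‖} = univ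

/-- Forward direction of the Ebenfelt–Khavinson–Shapiro theorem:
the fingerprint `k` of an analytic connected polynomial lemniscate of degree `n`
satisfies `k(z)^n = B(z)` for a finite Blaschke product `B` of degree `n` whose
zeros are the preimages under `φ₋` of the roots of `P`. -/
theorem eks_forward (n : ℕ) (hn : 1 ≤ n) (P : ℂ[X]) (hdeg : P.natDegree = n)
    (hlead : ∃ c : ℝ, 0 < c ∧ P.leadingCoeff = (c : ℂ))
    (φm φp : ℂ → ℂ)
    (hpair : ConformalPair {z : ℂ | ‖P.eval z‖ = 1} φm φp)
    (hroots : ∀ z : ℂ, P.eval z = 0 → z ∈ φm '' (ball 0 1)) :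
    ∃ a : Fin n → ℂ, (∀ k, ‖a k‖ < 1) ∧
      (Finset.univ.val.map (fun k => φm (a k))) = P.roots ∧
      ∃ lam : ℂ, ‖lam‖ = 1 ∧
        ∀ z w : ℂ, ‖z‖ = 1 → ‖w‖ = 1 → φp w = φm z →
          w ^ n = lam * ∏ k, (z - a k) / (1 - (starRingEnd ℂ) (a k) * z) := by
  classical
  have hP0 : P ≠ 0 := by
    intro h
    rw [h, natDegree_zero] at hdeg
    omega
  have hsplits : P.Splits := IsAlgClosed.splits P
  have hcard : Multiset.card P.roots = n := by
    rw [← hdeg]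
    exact (Polynomial.splits_iff_card_roots.mp hsplits)
  set f : ℂ → ℂ := fun r => if h : ∃ x, x ∈ ball (0:ℂ) 1 ∧ φm x = r then h.choose else 0
    with hfdef
  have hf : ∀ r ∈ P.roots, f r ∈ ball (0:ℂ) 1 ∧ φm (f r) = r := by
    intro r hr
    have hr0 : P.eval r = 0 := (Polynomial.mem_roots hP0).mp hr
    obtain ⟨x, hx, hxr⟩ := hroots r hr0
    have hex : ∃ x, x ∈ ball (0:ℂ) 1 ∧ φm x = r := ⟨x, hx, hxr⟩
    rw [hfdef]
    simp only [dif_pos hex]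
    exact hex.choose_spec
  obtain ⟨a, ha_enum⟩ := multiset_exists_enum (P.roots.map f) (by rw [Multiset.card_map, hcard])
  have hmem : ∀ k, ∃ r ∈ P.roots, f r = a k := by
    intro k
    have : a k ∈ Finset.univ.val.map a :=
      Multiset.mem_map.mpr ⟨k, Finset.mem_val.mpr (Finset.mem_univ k), rfl⟩
    rw [ha_enum] at this
    exact Multiset.mem_map.mp this
  have hball : ∀ k, a k ∈ ball (0:ℂ) 1 := by
    intro k
    obtain ⟨r, hr, hfr⟩ := hmem k
    rw [← hfr]
    exact (hf r hr).1
  have hroots_eq : (Finset.univ.val.map (fun k => φm (a k))) = P.roots := by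
    have h1 : (Finset.univ.val.map (fun k => φm (a k))) = (Finset.univ.val.map a).map φm := by
      rw [Multiset.map_map]
      rfl
    rw [h1, ha_enum, Multiset.map_map]
    have : P.roots.map (φm ∘ f) = P.roots.map id :=
      Multiset.map_congr rfl (fun r hr => (hf r hr).2)
    rw [this, Multiset.map_id]
  have hPfact : ∀ x : ℂ, P.eval x = P.leadingCoeff * ∏ k, (x - φm (a k)) := by
    intro x
    have hPf := (C_leadingCoeff_mul_prod_multiset_X_sub_C (hcard.trans hdeg.symm)).symm
    conv_lhs => rw [hPf]
    rw [eval_mul, eval_C, Polynomial.eval_multiset_prod]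
    congr 1
    rw [← hroots_eq, Multiset.map_map, Multiset.map_map, Finset.prod_eq_multiset_prod]
    apply congrArg
    apply Multiset.map_congr rfl
    intro k _
    simp
  have hcc : P.leadingCoeff ≠ 0 := leadingCoeff_ne_zero.mpr hP0
  -- boundary values
  have hbndm : ∀ z ∈ sphere (0:ℂ) 1, ‖P.eval (φm z)‖ = 1 := by
    intro z hz
    have : φm z ∈ {z : ℂ | ‖P.eval z‖ = 1} := hpair.mapm ▸ mem_image_of_mem φm hz
    exact this
  have hbndp : ∀ w : ℂ, ‖w‖ = 1 → ‖P.eval (φp w)‖ = 1 := by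
    intro w hw
    have hws : w ∈ sphere (0:ℂ) 1 := by simpa using hw
    have : φp w ∈ {z : ℂ | ‖P.eval z‖ = 1} := hpair.mapp ▸ mem_image_of_mem φp hws
    exact this
  -- interior Blaschke factorization
  obtain ⟨lam, hlam1, hlam⟩ := interior_blaschke hpair.contm hpair.injm hpair.holm hball hcc
    hPfact hbndm
  -- the exterior map: no zeros of P outside
  have hnz : ∀ w : ℂ, 1 ≤ ‖w‖ → P.eval (φp w) ≠ 0 := by
    intro w hw h0
    have hmemm : φp w ∈ φm '' ball 0 1 := hroots _ h0
    rcases lt_or_eq_of_le hw with hlt | heq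
    · have hmemp : φp w ∈ φp '' {w : ℂ | 1 < ‖w‖} := mem_image_of_mem φp hlt
      exact Set.disjoint_left.mp hpair.disj_mp hmemm hmemp
    · have hws : w ∈ sphere (0:ℂ) 1 := by simp [← heq]
      have hmemG : φp w ∈ {z : ℂ | ‖P.eval z‖ = 1} := hpair.mapp ▸ mem_image_of_mem φp hws
      exact Set.disjoint_left.mp hpair.disj_mG hmemm hmemG
  obtain ⟨d, hd, htend⟩ := hpair.deriv_infty
  obtain ⟨mu, hmu1, hmu⟩ := exterior_power hpair.contp hpair.holp hd htend hn P hdeg hnz hbndp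
  have hmune : mu ≠ 0 := by
    intro h
    rw [h] at hmu1
    norm_num at hmu1
  refine ⟨a, fun k => mem_ball_zero_iff.mp (hball k), hroots_eq, mu⁻¹ * lam, ?_, ?_⟩
  · rw [norm_mul, norm_inv, hmu1, hlam1]
    norm_num
  · intro z w hz hw heval
    have hzc : z ∈ closedBall (0:ℂ) 1 := by
      rw [mem_closedBall_zero_iff, hz]
    have h1 : P.eval (φp w) = mu * w ^ n := hmu w hw
    have h2 : P.eval (φm z) = lam * ∏ k, (z - a k) / (1 - (starRingEnd ℂ) (a k) * z) :=
      hlam z hzc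
    rw [heval, h2] at h1
    rw [mul_assoc, h1, inv_mul_cancel_left₀ hmune]
end

section
/- Uniqueness of a polynomial with a given lemniscate (the uniqueness assertion in the converse part of the Ebenfelt–Khavinson–Shapiro theorem, proved by the maximum modulus principle): Let n ≥ 1 and let P₁, P₂ ∈ ℂ[X] both have degree n and positive real leading coefficients. If the lemniscates coincide, i.e. {z ∈ ℂ : |P₁(z)| = 1} = {z ∈ ℂ : |P₂(z)| = 1}, then P₁ = P₂. -/
open Complex Polynomial
open Filter Metric Set Bornology

/-- Convert an eventual property at `cobounded` to a property outside a ball. -/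
lemma cobounded_to_radius {p : ℂ → Prop} (h : ∀ᶠ z in Bornology.cobounded ℂ, p z) :
    ∃ R : ℝ, 1 ≤ R ∧ ∀ z : ℂ, R ≤ ‖z‖ → p z := by
  rw [← comap_norm_atTop, eventually_comap] at h
  obtain ⟨M, hM⟩ := h.exists_forall_of_atTop
  exact ⟨max M 1, le_max_right _ _, fun z hz => hM ‖z‖ (le_trans (le_max_left _ _) hz) z rfl⟩

lemma infinite_of_segment {S : Set ℂ} (z₀ c : ℂ) (hc : c ≠ 0)
    (h : ∀ t : ℝ, t ∈ Set.Ioo (0:ℝ) 1 → z₀ + (t : ℂ) * c ∈ S) : S.Infinite := by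
  have hIoo : (Set.Ioo (0:ℝ) 1).Infinite := Set.Ioo_infinite (by norm_num)
  have hinj : Set.InjOn (fun t : ℝ => z₀ + (t : ℂ) * c) (Set.Ioo 0 1) := by
    intro a _ b _ hab
    have hab' : (a : ℂ) * c = (b : ℂ) * c := by
      have := add_left_cancel hab
      exact this
    have := mul_right_cancel₀ hc hab'
    exact_mod_cast this
  exact ((hIoo.image hinj).mono (by rintro z ⟨t, ht, rfl⟩; exact h t ht))

lemma poly_eq_of_eval_eq_on_infinite {p q : ℂ[X]} {S : Set ℂ} (hS : S.Infinite)
    (h : ∀ z ∈ S, p.eval z = q.eval z) : p = q := by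
  have : p - q = 0 := by
    apply Polynomial.eq_zero_of_infinite_isRoot
    exact hS.mono fun z hz => by simp [Polynomial.IsRoot, h z hz]
  exact sub_eq_zero.mp this
  

lemma tendsto_eval_div_pow (P : ℂ[X]) :
    Filter.Tendsto (fun z : ℂ => P.eval z / z ^ P.natDegree) (Bornology.cobounded ℂ)
      (nhds P.leadingCoeff) := by
  set n := P.natDegree with hn
  set F : ℂ → ℂ := fun w => ∑ i ∈ Finset.range (n + 1), P.coeff i * w ^ (n - i) with hF
  have hcont : Continuous F := by
    apply continuous_finset_sum
    intro i _
    fun_prop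
  have hF0 : F 0 = P.leadingCoeff := by
    rw [hF]
    simp only
    rw [Finset.sum_eq_single n]
    · rw [Nat.sub_self, pow_zero, mul_one, hn, Polynomial.leadingCoeff]
    · intro i hi hne
      have hin : i ≤ n := Nat.lt_succ_iff.mp (Finset.mem_range.mp hi)
      have : 0 < n - i := Nat.sub_pos_of_lt (lt_of_le_of_ne hin hne)
      simp [zero_pow this.ne']
    · intro h; exact absurd (Finset.self_mem_range_succ n) h
  have key : ∀ z : ℂ, z ≠ 0 → P.eval z / z ^ n = F z⁻¹ := by
    intro z hz
    rw [Polynomial.eval_eq_sum_range, Finset.sum_div]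
    apply Finset.sum_congr rfl
    intro i hi
    have hin : i ≤ n := Nat.lt_succ_iff.mp (Finset.mem_range.mp hi)
    have hzn : z ^ n = z ^ i * z ^ (n - i) := by
      rw [← pow_add, Nat.add_sub_cancel' hin]
    rw [hzn, inv_pow]
    have h1 : z ^ i ≠ 0 := pow_ne_zero _ hz
    have h2 : z ^ (n - i) ≠ 0 := pow_ne_zero _ hz
    field_simp
  have h1 : Filter.Tendsto (fun z : ℂ => F z⁻¹) (Bornology.cobounded ℂ)
      (nhds P.leadingCoeff) := by
    rw [← hF0]
    exact (hcont.tendsto 0).comp Filter.tendsto_inv₀_cobounded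
  refine h1.congr' ?_
  filter_upwards [eventually_cobounded_le_norm 1] with z hz
  have hz0 : z ≠ 0 := by
    intro h; rw [h, norm_zero] at hz; linarith
  exact (key z hz0).symm

lemma tendsto_eval_div (P Q : ℂ[X]) (hdeg : P.natDegree = Q.natDegree) (hQ : 0 < Q.degree) :
    Filter.Tendsto (fun z : ℂ => P.eval z / Q.eval z) (Bornology.cobounded ℂ)
      (nhds (P.leadingCoeff / Q.leadingCoeff)) := by
  have hQne : Q ≠ 0 := fun h => by simp [h] at hQ
  have hQ0 : Q.leadingCoeff ≠ 0 := Polynomial.leadingCoeff_ne_zero.mpr hQne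
  have h := (tendsto_eval_div_pow P).div (tendsto_eval_div_pow Q) hQ0
  refine h.congr' ?_
  have hev : ∀ᶠ z in Bornology.cobounded ℂ, 1 ≤ ‖Q.eval z‖ :=
    (Q.tendsto_norm_atTop hQ tendsto_norm_cobounded_atTop).eventually_ge_atTop 1
  filter_upwards [hev, eventually_cobounded_le_norm 1] with z h1 h2
  have hz0 : z ≠ 0 := by
    intro h; rw [h, norm_zero] at h2; linarith
  have hQz : Q.eval z ≠ 0 := by
    intro h; rw [h] at h1; simp at h1; linarith
  have hzn : z ^ P.natDegree ≠ 0 := pow_ne_zero _ hz0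
  rw [hdeg]
  simp only [Pi.div_apply]
  field_simp

lemma sublevel_subset (P Q : ℂ[X]) (hP : 0 < P.degree)
    (hsub : {z : ℂ | ‖P.eval z‖ = 1} ⊆ {z : ℂ | ‖Q.eval z‖ = 1}) :
    {z : ℂ | ‖P.eval z‖ ≤ 1} ⊆ {z : ℂ | ‖Q.eval z‖ ≤ 1} := by
  have hPc : Continuous fun w : ℂ => ‖P.eval w‖ := by fun_prop
  intro z hz
  have hz' : ‖P.eval z‖ ≤ 1 := hz
  rcases eq_or_lt_of_le hz' with h | h
  · exact le_of_eq (hsub h)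
  · set W := {w : ℂ | ‖P.eval w‖ < 1} with hW
    have hWo : IsOpen W := isOpen_lt hPc continuous_const
    have hWb : Bornology.IsBounded W := by
      obtain ⟨R, hR1, hR⟩ := cobounded_to_radius
        ((P.tendsto_norm_atTop hP tendsto_norm_cobounded_atTop).eventually_ge_atTop 1)
      apply (Metric.isBounded_closedBall (x := (0:ℂ)) (r := R)).subset
      intro w hw
      by_contra hb
      have : R ≤ ‖w‖ := by
        simp only [Metric.mem_closedBall, Complex.dist_eq, sub_zero] at hb
        have : R < ‖w‖ := not_le.mp hb
        simpa using this.le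
      exact absurd (hR w this) (by simp only [hW, Set.mem_setOf_eq] at hw; linarith)
    have hfr : ∀ w ∈ frontier W, ‖Q.eval w‖ ≤ 1 := by
      intro w hw
      have h1 : ‖P.eval w‖ ≤ 1 := by
        have hcl : closure W ⊆ {w : ℂ | ‖P.eval w‖ ≤ 1} :=
          closure_lt_subset_le hPc continuous_const
        exact hcl (frontier_subset_closure hw)
      have h2 : ¬ ‖P.eval w‖ < 1 := by
        rw [hWo.frontier_eq] at hw
        exact hw.2
      exact le_of_eq (hsub (le_antisymm h1 (not_lt.mp h2)))
    exact Complex.norm_le_of_forall_mem_frontier_norm_le hWb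
      ((Q.differentiable).diffContOnCl) hfr (subset_closure h)

lemma max_principle_dichotomy {U V : Set ℂ} (hUo : IsOpen U)
    (hUV : closure U ⊆ V) {f : ℂ → ℂ} (hf : DifferentiableOn ℂ f V)
    {R₀ : ℝ} (hR₀1 : 1 ≤ R₀) (hR₀U : ∀ z : ℂ, R₀ ≤ ‖z‖ → z ∈ U)
    {M : ℝ} (hM : ∀ z : ℂ, R₀ ≤ ‖z‖ → ‖f z‖ ≤ M)
    (hfront : ∀ z ∈ frontier U, ‖f z‖ ≤ 1) :
    (∀ z ∈ U, ‖f z‖ ≤ 1) ∨ ∃ a : ℂ, ∀ z : ℂ, 2 * R₀ ≤ ‖z‖ → f z = a := by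
  have hR₀0 : (0:ℝ) < R₀ := lt_of_lt_of_le one_pos hR₀1
  set B := Metric.ball (0:ℂ) R₀⁻¹ with hB
  have hmem : ∀ w : ℂ, w ∈ B \ {0} → R₀ ≤ ‖w⁻¹‖ ∧ w⁻¹ ∈ U := by
    intro w hw
    have hw0 : w ≠ 0 := hw.2
    have hwlt : ‖w‖ < R₀⁻¹ := by simpa [hB] using mem_ball_zero_iff.mp hw.1
    have h1 : R₀ ≤ ‖w⁻¹‖ := by
      rw [norm_inv]
      rw [le_inv_comm₀ hR₀0 (norm_pos_iff.mpr hw0)]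
      exact hwlt.le
    exact ⟨h1, hR₀U _ h1⟩
  have hdiff : DifferentiableOn ℂ (fun w => f w⁻¹) (B \ {0}) := by
    apply DifferentiableOn.comp hf
    · exact DifferentiableOn.inv differentiableOn_id (fun w hw => hw.2)
    · intro w hw
      exact hUV (subset_closure (hmem w hw).2)
  have hbdd : BddAbove ((norm ∘ fun w => f w⁻¹) '' (B \ {0})) := by
    refine ⟨M, ?_⟩
    rintro x ⟨w, hw, rfl⟩
    exact hM _ (hmem w hw).1
  set g := Function.update (fun w : ℂ => f w⁻¹) 0
    (limUnder (nhdsWithin (0:ℂ) {(0:ℂ)}ᶜ) (fun w : ℂ => f w⁻¹)) with hg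
  have hgd : DifferentiableOn ℂ g B :=
    Complex.differentiableOn_update_limUnder_of_bddAbove
      (Metric.ball_mem_nhds 0 (inv_pos.mpr hR₀0)) hdiff hbdd
  have hgeq : ∀ w : ℂ, w ≠ 0 → g w = f w⁻¹ := fun w hw => Function.update_of_ne hw _ _
  set r := (2 * R₀)⁻¹ with hr
  have hrpos : (0:ℝ) < r := by rw [hr]; positivity
  have hrlt : r < R₀⁻¹ := by
    rw [hr]
    exact inv_strictAnti₀ hR₀0 (by linarith)
  have hrB : Metric.closedBall (0:ℂ) r ⊆ B := Metric.closedBall_subset_ball hrlt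
  obtain ⟨w₀, hw₀mem, hw₀max⟩ := (isCompact_closedBall (0:ℂ) r).exists_isMaxOn
    ⟨0, Metric.mem_closedBall_self hrpos.le⟩
    ((hgd.continuousOn.mono hrB).norm)
  set m := ‖g w₀‖ with hm
  have key : ∀ z ∈ U, ‖f z‖ ≤ max 1 m := by
    intro z hz
    set R := max (2 * R₀) (‖z‖ + 1) with hR
    have hR2 : 2 * R₀ ≤ R := le_max_left _ _
    have hRpos : (0:ℝ) < R := lt_of_lt_of_le (by positivity) hR2
    have hzR : ‖z‖ < R := lt_of_lt_of_le (lt_add_one _) (le_max_right _ _)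
    have hzmem : z ∈ U ∩ Metric.ball 0 R := ⟨hz, mem_ball_zero_iff.mpr hzR⟩
    apply Complex.norm_le_of_forall_mem_frontier_norm_le
      (Metric.isBounded_ball.subset Set.inter_subset_right)
      ⟨hf.mono (fun w hw => hUV (subset_closure hw.1)),
        hf.continuousOn.mono (le_trans (closure_mono Set.inter_subset_left) hUV :
          closure (U ∩ Metric.ball 0 R) ⊆ V)⟩
      ?_ (subset_closure hzmem)
    intro w hw
    rcases frontier_inter_subset U (Metric.ball 0 R) hw with h | h
    · exact le_trans (hfront w h.1) (le_max_left _ _)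
    · have hwsph : ‖w‖ = R := by
        have h2 := h.2
        rw [frontier_ball (0:ℂ) hRpos.ne'] at h2
        simpa [Complex.dist_eq, mem_sphere_zero_iff_norm] using h2
      have hw0 : w ≠ 0 := by
        intro hc; rw [hc, norm_zero] at hwsph; linarith
      have hwcb : w⁻¹ ∈ Metric.closedBall (0:ℂ) r := by
        rw [Metric.mem_closedBall, dist_zero_right, norm_inv, hwsph, hr]
        exact inv_anti₀ (by positivity) hR2
      calc ‖f w‖ = ‖g w⁻¹‖ := by rw [hgeq w⁻¹ (inv_ne_zero hw0), inv_inv]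
        _ ≤ m := hw₀max hwcb
        _ ≤ max 1 m := le_max_right _ _
  by_cases hcase : m ≤ 1
  · left
    intro z hz
    have := key z hz
    rwa [max_eq_left hcase] at this
  · right
    push_neg at hcase
    have hgle : ∀ w ∈ B, ‖g w‖ ≤ m := by
      intro w hw
      rcases eq_or_ne w 0 with rfl | hw0
      · exact hw₀max (Metric.mem_closedBall_self hrpos.le)
      · rw [hgeq w hw0]
        have := key _ (hmem w ⟨hw, hw0⟩).2
        rwa [max_eq_right hcase.le] at this
    have hw₀B : w₀ ∈ B := hrB hw₀mem
    have heq := Complex.eqOn_of_isPreconnected_of_isMaxOn_norm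
      (convex_ball (0:ℂ) R₀⁻¹).isPreconnected Metric.isOpen_ball hgd hw₀B
      (fun w hw => hgle w hw)
    refine ⟨g w₀, fun z hz => ?_⟩
    have hz0 : z ≠ 0 := by
      intro hc; rw [hc, norm_zero] at hz; linarith
    have hzB : z⁻¹ ∈ B := by
      rw [hB, mem_ball_zero_iff, norm_inv]
      calc ‖z‖⁻¹ ≤ (2 * R₀)⁻¹ := inv_anti₀ (by positivity) hz
        _ < R₀⁻¹ := hrlt
    have := heq hzB
    calc f z = g z⁻¹ := by rw [hgeq _ (inv_ne_zero hz0), inv_inv]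
      _ = g w₀ := this

lemma exists_norm_eval_eq_one (P : ℂ[X]) (hd : 0 < P.degree) : ∃ z : ℂ, ‖P.eval z‖ = 1 := by
  obtain ⟨z₀, hz₀⟩ := Complex.exists_root hd
  obtain ⟨R, hR1, hR⟩ := cobounded_to_radius
    ((P.tendsto_norm_atTop hd tendsto_norm_cobounded_atTop).eventually_ge_atTop 1)
  set S := R + ‖z₀‖ with hS
  have hS0 : (0:ℝ) ≤ S := by positivity
  set g : ℝ → ℝ := fun s => ‖P.eval (z₀ + (s : ℂ))‖ with hg
  have hcont : ContinuousOn g (Set.Icc 0 S) := by fun_prop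
  have h0 : g 0 = 0 := by simp [hg, show eval z₀ P = 0 from hz₀]
  have hS1 : 1 ≤ g S := by
    apply hR
    have htri : ‖(S : ℂ)‖ ≤ ‖z₀ + (S : ℂ)‖ + ‖z₀‖ := by
      calc ‖(S : ℂ)‖ = ‖(z₀ + (S : ℂ)) - z₀‖ := by ring_nf
        _ ≤ ‖z₀ + (S : ℂ)‖ + ‖z₀‖ := norm_sub_le _ _
    have hnS : ‖(S : ℂ)‖ = S := by
      rw [Complex.norm_real]; exact abs_of_nonneg hS0
    rw [hnS, hS] at htri
    linarith
  have hIVT := intermediate_value_Icc hS0 hcont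
  obtain ⟨s, _, hs⟩ := hIVT ⟨by rw [h0]; norm_num, hS1⟩
  exact ⟨z₀ + s, hs⟩

/-- Uniqueness of a polynomial with a given lemniscate: two polynomials of the
same degree `n ≥ 1` with positive real leading coefficients and the same
lemniscate `{z : |P(z)| = 1}` must be equal. -/
theorem lemniscate_polynomial_unique (n : ℕ) (hn : 1 ≤ n) (P₁ P₂ : ℂ[X])
    (hdeg1 : P₁.natDegree = n) (hdeg2 : P₂.natDegree = n)
    (hlead1 : ∃ c : ℝ, 0 < c ∧ P₁.leadingCoeff = (c : ℂ))
    (hlead2 : ∃ c : ℝ, 0 < c ∧ P₂.leadingCoeff = (c : ℂ))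
    (hset : {z : ℂ | ‖P₁.eval z‖ = 1} = {z : ℂ | ‖P₂.eval z‖ = 1}) :
    P₁ = P₂ := by
  obtain ⟨c₁, hc₁, hl1⟩ := hlead1
  obtain ⟨c₂, hc₂, hl2⟩ := hlead2
  have hd₁ : 0 < P₁.degree := Polynomial.natDegree_pos_iff_degree_pos.mp (by omega)
  have hd₂ : 0 < P₂.degree := Polynomial.natDegree_pos_iff_degree_pos.mp (by omega)
  have hc₁' : P₁.leadingCoeff ≠ 0 :=
    Polynomial.leadingCoeff_ne_zero.mpr (fun h => by simp [h] at hd₁)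
  -- sublevel sets coincide
  have hsub12 := sublevel_subset P₁ P₂ hd₁ (le_of_eq hset)
  have hsub21 := sublevel_subset P₂ P₁ hd₂ (le_of_eq hset.symm)
  have hcont1 : Continuous fun w : ℂ => ‖P₁.eval w‖ := by fun_prop
  set U := {z : ℂ | ‖P₁.eval z‖ ≤ 1}ᶜ with hU
  have hUo : IsOpen U := (isClosed_le hcont1 continuous_const).isOpen_compl
  have hU1 : ∀ z ∈ U, 1 < ‖P₁.eval z‖ := fun z hz => not_le.mp hz
  have hU2 : ∀ z ∈ U, 1 < ‖P₂.eval z‖ := by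
    intro z hz
    by_contra h
    exact hz (hsub21 (not_lt.mp h))
  -- frontier values
  have hfr : ∀ z ∈ frontier U, ‖P₁.eval z‖ = 1 ∧ ‖P₂.eval z‖ = 1 := by
    intro z hz
    rw [hU, frontier_compl] at hz
    have h1 : ‖P₁.eval z‖ ≤ 1 :=
      (isClosed_le hcont1 continuous_const).frontier_subset hz
    have h2 : ¬ ‖P₁.eval z‖ < 1 := by
      intro hlt
      have hop : IsOpen {w : ℂ | ‖P₁.eval w‖ < 1} := isOpen_lt hcont1 continuous_const
      have hsub' : {w : ℂ | ‖P₁.eval w‖ < 1} ⊆ {w : ℂ | ‖P₁.eval w‖ ≤ 1} := by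
        intro w hw
        simp only [Set.mem_setOf_eq] at hw ⊢
        exact hw.le
      exact hz.2 (interior_maximal hsub' hop hlt)
    have e1 : ‖P₁.eval z‖ = 1 := le_antisymm h1 (not_lt.mp h2)
    exact ⟨e1, (Set.ext_iff.mp hset z).mp e1⟩
  have hclU : closure U ⊆ {z : ℂ | P₁.eval z ≠ 0} := by
    rw [closure_eq_self_union_frontier]
    rintro z (hz | hz)
    · intro h
      have := hU1 z hz; rw [h, norm_zero] at this; linarith
    · intro h
      have := (hfr z hz).1; rw [h, norm_zero] at this; linarith
  have hclU2 : closure U ⊆ {z : ℂ | P₂.eval z ≠ 0} := by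
    rw [closure_eq_self_union_frontier]
    rintro z (hz | hz)
    · intro h
      have := hU2 z hz; rw [h, norm_zero] at this; linarith
    · intro h
      have := (hfr z hz).2; rw [h, norm_zero] at this; linarith
  -- asymptotics
  have t12 := tendsto_eval_div P₂ P₁ (by rw [hdeg1, hdeg2]) hd₁
  have t21 := tendsto_eval_div P₁ P₂ (by rw [hdeg1, hdeg2]) hd₂
  have ev1 : ∀ᶠ z in Bornology.cobounded ℂ, 2 ≤ ‖P₁.eval z‖ :=
    (P₁.tendsto_norm_atTop hd₁ tendsto_norm_cobounded_atTop).eventually_ge_atTop 2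
  have ev3 : ∀ᶠ z in Bornology.cobounded ℂ,
      ‖P₂.eval z / P₁.eval z‖ ≤ ‖P₂.leadingCoeff / P₁.leadingCoeff‖ + 1 :=
    t12.norm.eventually (eventually_le_nhds (lt_add_one _))
  have ev4 : ∀ᶠ z in Bornology.cobounded ℂ,
      ‖P₁.eval z / P₂.eval z‖ ≤ ‖P₁.leadingCoeff / P₂.leadingCoeff‖ + 1 :=
    t21.norm.eventually (eventually_le_nhds (lt_add_one _))
  obtain ⟨R₀, hR₀1, hR₀⟩ := cobounded_to_radius ((ev1.and ev3).and ev4)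
  have hR₀U : ∀ z : ℂ, R₀ ≤ ‖z‖ → z ∈ U := by
    intro z hz
    have := ((hR₀ z hz).1).1
    simp only [hU, Set.mem_compl_iff, Set.mem_setOf_eq]
    intro h; linarith
  -- the two ratio functions
  set f₁ : ℂ → ℂ := fun z => P₂.eval z / P₁.eval z with hf₁
  set f₂ : ℂ → ℂ := fun z => P₁.eval z / P₂.eval z with hf₂
  have hdf₁ : DifferentiableOn ℂ f₁ {z : ℂ | P₁.eval z ≠ 0} :=
    DifferentiableOn.div (P₂.differentiable.differentiableOn)
      (P₁.differentiable.differentiableOn) (fun z hz => hz)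
  have hdf₂ : DifferentiableOn ℂ f₂ {z : ℂ | P₂.eval z ≠ 0} :=
    DifferentiableOn.div (P₁.differentiable.differentiableOn)
      (P₂.differentiable.differentiableOn) (fun z hz => hz)
  have hfront1 : ∀ z ∈ frontier U, ‖f₁ z‖ ≤ 1 := by
    intro z hz
    rw [hf₁]; simp only [norm_div, (hfr z hz).1, (hfr z hz).2]; norm_num
  have hfront2 : ∀ z ∈ frontier U, ‖f₂ z‖ ≤ 1 := by
    intro z hz
    rw [hf₂]; simp only [norm_div, (hfr z hz).1, (hfr z hz).2]; norm_num
  have dich1 := max_principle_dichotomy hUo hclU hdf₁ hR₀1 hR₀U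
    (fun z hz => ((hR₀ z hz).1).2) hfront1
  have dich2 := max_principle_dichotomy hUo hclU2 hdf₂ hR₀1 hR₀U
    (fun z hz => (hR₀ z hz).2) hfront2
  -- in all cases we obtain a scalar relation
  have main : (∃ a : ℂ, P₂ = Polynomial.C a * P₁) ∨ (∃ a : ℂ, P₁ = Polynomial.C a * P₂) := by
    have houter : ∀ S : Set ℂ, (∀ z : ℂ, 2 * R₀ ≤ ‖z‖ → z ∈ S) → S.Infinite := by
      intro S hS
      apply infinite_of_segment ((3 * R₀ : ℝ) : ℂ) ((R₀ : ℝ) : ℂ)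
        (by simp; intro h; linarith)
      intro t ht
      apply hS
      have : ((3 * R₀ : ℝ) : ℂ) + (t : ℂ) * ((R₀ : ℝ) : ℂ) = (((3 + t) * R₀ : ℝ) : ℂ) := by
        push_cast; ring
      rw [this, Complex.norm_real, Real.norm_eq_abs,
        _root_.abs_of_nonneg (by nlinarith [ht.1.le, ht.2.le] : (0:ℝ) ≤ (3 + t) * R₀)]
      nlinarith [ht.1.le, ht.2.le]
    rcases dich1 with hb1 | ⟨a, ha⟩
    · rcases dich2 with hb2 | ⟨a, ha⟩
      · -- both bounded: |f₁| ≡ 1 on U, constant on a ball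
        left
        have hnorm1 : ∀ z ∈ U, ‖f₁ z‖ = 1 := by
          intro z hz
          have h1 := hb1 z hz
          have h2 := hb2 z hz
          have hP₁z : P₁.eval z ≠ 0 := hclU (subset_closure hz)
          have hP₂z : P₂.eval z ≠ 0 := hclU2 (subset_closure hz)
          rw [hf₁, norm_div] at h1 ⊢
          rw [hf₂, norm_div] at h2
          have hn1 : 0 < ‖P₁.eval z‖ := norm_pos_iff.mpr hP₁z
          have hn2 : 0 < ‖P₂.eval z‖ := norm_pos_iff.mpr hP₂z
          rw [div_le_one hn1] at h1
          rw [div_le_one hn2] at h2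
          rw [div_eq_one_iff_eq hn1.ne']
          linarith
        set z₀ : ℂ := ((2 * R₀ : ℝ) : ℂ) with hz₀
        have hz₀n : ‖z₀‖ = 2 * R₀ := by
          rw [hz₀, Complex.norm_real, Real.norm_eq_abs, _root_.abs_of_nonneg (by linarith)]
        have hball : Metric.ball z₀ R₀ ⊆ U := by
          intro w hw
          apply hR₀U
          have : ‖w - z₀‖ < R₀ := by simpa [Complex.dist_eq] using hw
          have htri : ‖z₀‖ ≤ ‖w‖ + ‖w - z₀‖ := by
            calc ‖z₀‖ = ‖w - (w - z₀)‖ := by ring_nf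
              _ ≤ ‖w‖ + ‖w - z₀‖ := norm_sub_le _ _
          rw [hz₀n] at htri
          linarith
        have hz₀U : z₀ ∈ U := hball (Metric.mem_ball_self (by linarith))
        have heq := Complex.eqOn_of_isPreconnected_of_isMaxOn_norm
          (convex_ball z₀ R₀).isPreconnected Metric.isOpen_ball
          (hdf₁.mono (fun w hw => hclU (subset_closure (hball hw))))
          (Metric.mem_ball_self (by linarith : (0:ℝ) < R₀))
          (fun w hw => by
            simp only [Set.mem_setOf_eq, Function.comp_apply]
            rw [hnorm1 w (hball hw), hnorm1 z₀ hz₀U])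
        refine ⟨f₁ z₀, ?_⟩
        apply poly_eq_of_eval_eq_on_infinite
          (infinite_of_segment z₀ ((R₀/2 : ℝ) : ℂ)
            (by simp; intro h; linarith) (S := Metric.ball z₀ R₀) ?_)
          ?_
        · intro t ht
          rw [Metric.mem_ball, Complex.dist_eq]
          have : z₀ + (t : ℂ) * ((R₀/2 : ℝ) : ℂ) - z₀ = ((t * (R₀/2) : ℝ) : ℂ) := by
            push_cast; ring
          rw [this, Complex.norm_real, Real.norm_eq_abs,
            _root_.abs_of_nonneg (by nlinarith [ht.1.le, ht.2.le] : (0:ℝ) ≤ t * (R₀ / 2))]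
          nlinarith [ht.1.le, ht.2]
        · intro z hz
          have hP₁z : P₁.eval z ≠ 0 := hclU (subset_closure (hball hz))
          have := heq hz
          simp only [Function.const_apply] at this
          rw [Polynomial.eval_mul, Polynomial.eval_C]
          rw [hf₁] at this
          field_simp at this ⊢
          rw [this]; ring
      · -- f₂ constant on outer region
        right
        refine ⟨a, ?_⟩
        apply poly_eq_of_eval_eq_on_infinite (houter {z : ℂ | 2 * R₀ ≤ ‖z‖} (fun z hz => hz))
        intro z hz
        have hzU : z ∈ U := hR₀U z (le_trans (by linarith) hz)
        have hP₂z : P₂.eval z ≠ 0 := hclU2 (subset_closure hzU)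
        have := ha z hz
        rw [hf₂] at this
        rw [Polynomial.eval_mul, Polynomial.eval_C]
        field_simp at this ⊢
        rw [this]
    · -- f₁ constant on outer region
      left
      refine ⟨a, ?_⟩
      apply poly_eq_of_eval_eq_on_infinite (houter {z : ℂ | 2 * R₀ ≤ ‖z‖} (fun z hz => hz))
      intro z hz
      have hzU : z ∈ U := hR₀U z (le_trans (by linarith) hz)
      have hP₁z : P₁.eval z ≠ 0 := hclU (subset_closure hzU)
      have := ha z hz
      rw [hf₁] at this
      rw [Polynomial.eval_mul, Polynomial.eval_C]
      field_simp at this ⊢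
      rw [this]
  -- conclude
  obtain ⟨z₁, hz₁⟩ := exists_norm_eval_eq_one P₁ hd₁
  have hz₂ : ‖P₂.eval z₁‖ = 1 := (Set.ext_iff.mp hset z₁).mp hz₁
  rcases main with ⟨a, ha⟩ | ⟨a, ha⟩
  · have hna : ‖a‖ = 1 := by
      have : P₂.eval z₁ = a * P₁.eval z₁ := by rw [ha]; simp
      rw [this, norm_mul, hz₁, mul_one] at hz₂
      exact hz₂
    have hlc : P₂.leadingCoeff = a * P₁.leadingCoeff := by
      rw [ha, Polynomial.leadingCoeff_mul, Polynomial.leadingCoeff_C]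
    rw [hl1, hl2] at hlc
    have hceq : c₂ = c₁ := by
      have := congrArg norm hlc
      rw [norm_mul, hna, one_mul, Complex.norm_real, Complex.norm_real,
        Real.norm_eq_abs, Real.norm_eq_abs, _root_.abs_of_pos hc₂,
        _root_.abs_of_pos hc₁] at this
      exact this
    have ha1 : a = 1 := by
      rw [hceq] at hlc
      have hc1ne : ((c₁ : ℂ)) ≠ 0 := Complex.ofReal_ne_zero.mpr hc₁.ne'
      have h' : a * (c₁ : ℂ) = 1 * (c₁ : ℂ) := by rw [one_mul, ← hlc]
      exact mul_right_cancel₀ hc1ne h'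
    rw [ha, ha1]; simp
  · have hna : ‖a‖ = 1 := by
      have : P₁.eval z₁ = a * P₂.eval z₁ := by rw [ha]; simp
      rw [this, norm_mul, hz₂, mul_one] at hz₁
      exact hz₁
    have hlc : P₁.leadingCoeff = a * P₂.leadingCoeff := by
      rw [ha, Polynomial.leadingCoeff_mul, Polynomial.leadingCoeff_C]
    rw [hl1, hl2] at hlc
    have hceq : c₁ = c₂ := by
      have := congrArg norm hlc
      rw [norm_mul, hna, one_mul, Complex.norm_real, Complex.norm_real,
        Real.norm_eq_abs, Real.norm_eq_abs, _root_.abs_of_pos hc₁,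
        _root_.abs_of_pos hc₂] at this
      exact this
    have ha1 : a = 1 := by
      rw [hceq] at hlc
      have hc2ne : ((c₂ : ℂ)) ≠ 0 := Complex.ofReal_ne_zero.mpr hc₂.ne'
      have h' : a * (c₂ : ℂ) = 1 * (c₂ : ℂ) := by rw [one_mul, ← hlc]
      exact mul_right_cancel₀ hc2ne h'
    rw [ha, ha1]; simp
end

section
/- The quotient of two finite Blaschke products of the same degree has a critical point on the unit circle: let n ≥ 1 and let A(z) = μ·∏_{k=1}^n (z − a_k)/(1 − conj(a_k)·z) and B(z) = λ·∏_{k=1}^n (z − b_k)/(1 − conj(b_k)·z) be finite Blaschke products of degree n with a_1, …, a_n, b_1, …, b_n ∈ 𝔻 and |λ| = |μ| = 1. Then there exists z ∈ ℂ with |z| = 1 such that A'(z)·B(z) − A(z)·B'(z) = 0; equivalently, the rational function R = A/B satisfies R'(e^{iθ}) = 0 for some θ ∈ [0, 2π). -/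
open Complex intervalIntegral Real Finset

private lemma cast_normsq (w : ℂ) : ((‖w‖ ^ 2 : ℝ) : ℂ) = w * (starRingEnd ℂ) w := by
  rw [Complex.mul_conj]; norm_cast
  rw [Complex.normSq_eq_norm_sq]

private lemma den_ne (a z : ℂ) (ha : ‖a‖ < 1) (hz : ‖z‖ = 1) :
    1 - (starRingEnd ℂ) a * z ≠ 0 := by
  intro h
  have h2 : ‖(starRingEnd ℂ) a * z‖ = 1 := by
    have h3 : (starRingEnd ℂ) a * z = 1 := by linear_combination -h
    simp [h3]
  rw [norm_mul, RCLike.norm_conj, hz, mul_one] at h2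
  exact absurd h2 (ne_of_lt ha)

private lemma sub_ne (a z : ℂ) (ha : ‖a‖ < 1) (hz : ‖z‖ = 1) : z - a ≠ 0 := by
  intro h; rw [sub_eq_zero] at h; rw [h] at hz; exact absurd hz (ne_of_lt ha)

private lemma key_factor (a z : ℂ) (ha : ‖a‖ < 1) (hz : ‖z‖ = 1) :
    z * ((1 - (starRingEnd ℂ) a * a) / (1 - (starRingEnd ℂ) a * z) ^ 2) =
      (z - a) / (1 - (starRingEnd ℂ) a * z) * (((1 - ‖a‖ ^ 2) / ‖z - a‖ ^ 2 : ℝ) : ℂ) := by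
  have hza := sub_ne a z ha hz
  have hden := den_ne a z ha hz
  have hzz : z * (starRingEnd ℂ) z = 1 := by
    have := cast_normsq z; rw [hz] at this; simpa using this.symm
  have h1 := cast_normsq (z - a)
  have h2 := cast_normsq a
  rw [map_sub] at h1
  have hwc : (starRingEnd ℂ) z - (starRingEnd ℂ) a ≠ 0 := by
    intro h; apply hza
    have := congrArg (starRingEnd ℂ) h
    simpa using this
  rw [Complex.ofReal_div, Complex.ofReal_sub, Complex.ofReal_one, h1, h2,
    div_mul_div_comm, mul_div_assoc', div_eq_div_iff (pow_ne_zero 2 hden)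
      (mul_ne_zero hden (mul_ne_zero hza hwc))]
  linear_combination ((1 - (starRingEnd ℂ) a * a) * (z - a) * (1 - (starRingEnd ℂ) a * z)) * hzz

private lemma hasDerivAt_blf (a z : ℂ) (hden : 1 - (starRingEnd ℂ) a * z ≠ 0) :
    HasDerivAt (fun w => (w - a) / (1 - (starRingEnd ℂ) a * w))
      ((1 - (starRingEnd ℂ) a * a) / (1 - (starRingEnd ℂ) a * z) ^ 2) z := by
  have h1 : HasDerivAt (fun w : ℂ => w - a) 1 z := (hasDerivAt_id z).sub_const a
  have h2 : HasDerivAt (fun w : ℂ => 1 - (starRingEnd ℂ) a * w) (-((starRingEnd ℂ) a)) z := by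
    simpa using (((hasDerivAt_id z).const_mul ((starRingEnd ℂ) a)).const_sub 1)
  have h := h1.fun_div h2 hden
  refine h.congr_deriv ?_
  ring

private lemma prod_deriv (n : ℕ) (a : Fin n → ℂ) (ha : ∀ k, ‖a k‖ < 1) (mu z : ℂ)
    (hz : ‖z‖ = 1) :
    z * deriv (fun w => mu * ∏ k, (w - a k) / (1 - (starRingEnd ℂ) (a k) * w)) z
      = (mu * ∏ k, (z - a k) / (1 - (starRingEnd ℂ) (a k) * z)) *
        ((∑ k, (1 - ‖a k‖ ^ 2) / ‖z - a k‖ ^ 2 : ℝ) : ℂ) := by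
  have hprod : HasDerivAt (fun w => ∏ k, (w - a k) / (1 - (starRingEnd ℂ) (a k) * w))
      (∑ k, (∏ j ∈ Finset.univ.erase k, (z - a j) / (1 - (starRingEnd ℂ) (a j) * z)) •
        ((1 - (starRingEnd ℂ) (a k) * (a k)) / (1 - (starRingEnd ℂ) (a k) * z) ^ 2)) z :=
    HasDerivAt.fun_finsetProd (fun k _ => hasDerivAt_blf (a k) z (den_ne (a k) z (ha k) hz))
  have hA := hprod.const_mul mu
  rw [hA.deriv]
  have step : ∀ k : Fin n,
      z * ((∏ j ∈ Finset.univ.erase k, (z - a j) / (1 - (starRingEnd ℂ) (a j) * z)) •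
        ((1 - (starRingEnd ℂ) (a k) * (a k)) / (1 - (starRingEnd ℂ) (a k) * z) ^ 2))
      = (∏ j, (z - a j) / (1 - (starRingEnd ℂ) (a j) * z)) *
          (((1 - ‖a k‖ ^ 2) / ‖z - a k‖ ^ 2 : ℝ) : ℂ) := by
    intro k
    rw [smul_eq_mul,
      ← Finset.prod_erase_mul Finset.univ _ (Finset.mem_univ k)]
    have hk := key_factor (a k) z (ha k) hz
    linear_combination (∏ j ∈ Finset.univ.erase k, (z - a j) / (1 - (starRingEnd ℂ) (a j) * z)) * hk
  calc z * (mu * ∑ k, (∏ j ∈ Finset.univ.erase k, (z - a j) / (1 - (starRingEnd ℂ) (a j) * z)) •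
          ((1 - (starRingEnd ℂ) (a k) * (a k)) / (1 - (starRingEnd ℂ) (a k) * z) ^ 2))
      = mu * ∑ k, z * ((∏ j ∈ Finset.univ.erase k, (z - a j) / (1 - (starRingEnd ℂ) (a j) * z)) •
          ((1 - (starRingEnd ℂ) (a k) * (a k)) / (1 - (starRingEnd ℂ) (a k) * z) ^ 2)) := by
        rw [Finset.mul_sum, Finset.mul_sum, Finset.mul_sum]; apply Finset.sum_congr rfl
        intro k _; ring
    _ = mu * ∑ k, (∏ j, (z - a j) / (1 - (starRingEnd ℂ) (a j) * z)) *
          (((1 - ‖a k‖ ^ 2) / ‖z - a k‖ ^ 2 : ℝ) : ℂ) := by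
        congr 1; exact Finset.sum_congr rfl fun k _ => step k
    _ = (mu * ∏ k, (z - a k) / (1 - (starRingEnd ℂ) (a k) * z)) *
        ((∑ k, (1 - ‖a k‖ ^ 2) / ‖z - a k‖ ^ 2 : ℝ) : ℂ) := by
        rw [← Finset.mul_sum]; push_cast; ring

private lemma norm_exp_circle (θ : ℝ) : ‖Complex.exp (θ * I)‖ = 1 := by
  rw [Complex.norm_exp_ofReal_mul_I]

private lemma re_quot (a z : ℂ) (ha : ‖a‖ < 1) (hz : ‖z‖ = 1) :
    ((z + a) / (z - a)).re = (1 - ‖a‖ ^ 2) / ‖z - a‖ ^ 2 := by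
  have hza := sub_ne a z ha hz
  have hN : Complex.normSq (z - a) = ‖z - a‖ ^ 2 := by
    rw [Complex.normSq_eq_norm_sq]
  rw [Complex.div_re, hN, ← add_div]
  congr 1
  have hz2 : z.re ^ 2 + z.im ^ 2 = 1 := by
    have h : Complex.normSq z = 1 := by
      rw [Complex.normSq_eq_norm_sq, hz]; norm_num
    simpa [Complex.normSq_apply, sq] using h
  have ha2 : ‖a‖ ^ 2 = a.re ^ 2 + a.im ^ 2 := by
    rw [← Complex.normSq_eq_norm_sq, Complex.normSq_apply]; ring
  rw [ha2]
  simp only [Complex.add_re, Complex.sub_re, Complex.add_im, Complex.sub_im]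
  linear_combination hz2

private lemma cont_exp_circle : Continuous fun θ : ℝ => Complex.exp (θ * I) :=
  Complex.continuous_exp.comp (Complex.continuous_ofReal.mul continuous_const)

private lemma exp_sub_ne (a : ℂ) (ha : ‖a‖ < 1) (θ : ℝ) : Complex.exp (θ * I) - a ≠ 0 :=
  sub_ne a _ ha (norm_exp_circle θ)

private lemma cont_P (a : ℂ) (ha : ‖a‖ < 1) :
    Continuous fun θ : ℝ => (1 - ‖a‖ ^ 2) / ‖Complex.exp (θ * I) - a‖ ^ 2 :=
  continuous_const.div ((cont_exp_circle.sub continuous_const).norm.pow 2)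
    (fun θ => pow_ne_zero 2 (norm_ne_zero_iff.mpr (exp_sub_ne a ha θ)))

private lemma poisson (a : ℂ) (ha : ‖a‖ < 1) :
    (∫ θ in (0:ℝ)..(2 * π), (1 - ‖a‖ ^ 2) / ‖Complex.exp (θ * I) - a‖ ^ 2) = 2 * π := by
  have h1 : (∮ w in C(0, 1), (w - a)⁻¹) = 2 * π * I :=
    circleIntegral.integral_sub_inv_of_mem_ball (by simpa using ha)
  simp only [circleIntegral, deriv_circleMap, circleMap, Complex.ofReal_one, one_mul,
    zero_add, smul_eq_mul] at h1
  -- h1 : ∫ θ in 0..2π, exp (θ*I) * I * (exp (θ*I) - a)⁻¹ = 2 π I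
  have hcont1 : Continuous fun θ : ℝ => Complex.exp (θ * I) * I * (Complex.exp (θ * I) - a)⁻¹ :=
    (cont_exp_circle.mul continuous_const).mul
      ((cont_exp_circle.sub continuous_const).inv₀ (exp_sub_ne a ha))
  have hcontq : Continuous fun θ : ℝ =>
      (Complex.exp (θ * I) + a) / (Complex.exp (θ * I) - a) :=
    (cont_exp_circle.add continuous_const).div (cont_exp_circle.sub continuous_const)
      (exp_sub_ne a ha)
  have h2 : (∫ θ in (0:ℝ)..(2 * π),
      (Complex.exp (θ * I) + a) / (Complex.exp (θ * I) - a)) = 2 * π := by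
    have hpt : ∀ θ : ℝ, I * ((Complex.exp (θ * I) + a) / (Complex.exp (θ * I) - a))
        = 2 * (Complex.exp (θ * I) * I * (Complex.exp (θ * I) - a)⁻¹) - I := by
      intro θ
      have h := exp_sub_ne a ha θ
      rw [div_eq_mul_inv]
      linear_combination (-I) * mul_inv_cancel₀ h
    have hI : I * ∫ θ in (0:ℝ)..(2 * π),
        (Complex.exp (θ * I) + a) / (Complex.exp (θ * I) - a) = 2 * π * I := by
      rw [← intervalIntegral.integral_const_mul]
      rw [show (fun θ : ℝ => I * ((Complex.exp (θ * I) + a) / (Complex.exp (θ * I) - a)))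
          = fun θ : ℝ => 2 * (Complex.exp (θ * I) * I * (Complex.exp (θ * I) - a)⁻¹) - I
          from funext hpt]
      rw [intervalIntegral.integral_sub
        ((hcont1.intervalIntegrable 0 (2 * π)).const_mul 2)
        (intervalIntegrable_const),
        intervalIntegral.integral_const_mul, h1, intervalIntegral.integral_const]
      rw [sub_zero, Complex.real_smul]
      push_cast
      ring
    have hIne : (I : ℂ) ≠ 0 := Complex.I_ne_zero
    have h3 : I * (∫ θ in (0:ℝ)..(2 * π),
        (Complex.exp (θ * I) + a) / (Complex.exp (θ * I) - a)) = I * (2 * (π:ℝ)) := by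
      rw [hI]; ring
    exact mul_left_cancel₀ hIne h3
  have key : ∀ θ : ℝ, (1 - ‖a‖ ^ 2) / ‖Complex.exp (θ * I) - a‖ ^ 2
      = ((Complex.exp (θ * I) + a) / (Complex.exp (θ * I) - a)).re :=
    fun θ => (re_quot a _ ha (norm_exp_circle θ)).symm
  simp_rw [key]
  have hre := ContinuousLinearMap.intervalIntegral_comp_comm (μ := MeasureTheory.volume) Complex.reCLM
    (hcontq.intervalIntegrable 0 (2 * π))
  simp only [Complex.reCLM_apply] at hre
  rw [hre, h2]
  simp


/-- The quotient of two finite Blaschke products of the same degree `n` has a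
critical point on the unit circle: `A'·B − A·B'` vanishes somewhere on `𝕋`. -/
theorem blaschke_quotient_critical_point (n : ℕ) (hn : 1 ≤ n)
    (a b : Fin n → ℂ) (ha : ∀ k, ‖a k‖ < 1) (hb : ∀ k, ‖b k‖ < 1)
    (mu lam : ℂ) (hmu : ‖mu‖ = 1) (hlam : ‖lam‖ = 1)
    (A B : ℂ → ℂ)
    (hA : A = fun z => mu * ∏ k, (z - a k) / (1 - (starRingEnd ℂ) (a k) * z))
    (hB : B = fun z => lam * ∏ k, (z - b k) / (1 - (starRingEnd ℂ) (b k) * z)) :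
    ∃ z : ℂ, ‖z‖ = 1 ∧ deriv A z * B z - A z * deriv B z = 0 := by
  subst hA hB
  set SA : ℝ → ℝ := fun θ => ∑ k, (1 - ‖a k‖ ^ 2) / ‖Complex.exp (θ * I) - a k‖ ^ 2 with hSAdef
  set SB : ℝ → ℝ := fun θ => ∑ k, (1 - ‖b k‖ ^ 2) / ‖Complex.exp (θ * I) - b k‖ ^ 2 with hSBdef
  have hcontSA : Continuous SA := continuous_finset_sum _ fun k _ => cont_P (a k) (ha k)
  have hcontSB : Continuous SB := continuous_finset_sum _ fun k _ => cont_P (b k) (hb k)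
  have hcontS : Continuous fun θ => SA θ - SB θ := hcontSA.sub hcontSB
  have hintSA : (∫ θ in (0:ℝ)..(2 * π), SA θ) = n * (2 * π) := by
    rw [hSAdef]
    rw [intervalIntegral.integral_finset_sum
      (fun k _ => (cont_P (a k) (ha k)).intervalIntegrable 0 (2 * π))]
    rw [Finset.sum_congr rfl fun k _ => poisson (a k) (ha k)]
    simp [Finset.card_univ, mul_comm]
  have hintSB : (∫ θ in (0:ℝ)..(2 * π), SB θ) = n * (2 * π) := by
    rw [hSBdef]
    rw [intervalIntegral.integral_finset_sum
      (fun k _ => (cont_P (b k) (hb k)).intervalIntegrable 0 (2 * π))]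
    rw [Finset.sum_congr rfl fun k _ => poisson (b k) (hb k)]
    simp [Finset.card_univ, mul_comm]
  have hintS : (∫ θ in (0:ℝ)..(2 * π), (SA θ - SB θ)) = 0 := by
    rw [intervalIntegral.integral_sub (hcontSA.intervalIntegrable 0 (2 * π))
      (hcontSB.intervalIntegrable 0 (2 * π)), hintSA, hintSB, sub_self]
  set F : ℝ → ℝ := fun x => ∫ t in (0:ℝ)..x, (SA t - SB t) with hFdef
  have hF0 : F 0 = 0 := intervalIntegral.integral_same
  have hF2 : F (2 * π) = 0 := hintS
  have hpos : (0:ℝ) < 2 * π := by positivity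
  have hFcont : ContinuousOn F (Set.Icc 0 (2 * π)) := fun x _ =>
    ((hcontS.integral_hasStrictDerivAt 0 x).hasDerivAt.differentiableAt.continuousAt).continuousWithinAt
  obtain ⟨c, -, hc⟩ := exists_deriv_eq_zero hpos hFcont (hF0.trans hF2.symm)
  have hdF : deriv F c = SA c - SB c := Continuous.deriv_integral _ hcontS 0 c
  have hSc : SA c - SB c = 0 := by rw [← hdF, hc]
  refine ⟨Complex.exp (c * I), norm_exp_circle c, ?_⟩
  set z := Complex.exp ((c:ℝ) * I) with hzdef
  have hz : ‖z‖ = 1 := norm_exp_circle c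
  have hzne : z ≠ 0 := Complex.exp_ne_zero _
  have hdA := prod_deriv n a ha mu z hz
  have hdB := prod_deriv n b hb lam z hz
  have hmain : z * (deriv (fun w => mu * ∏ k, (w - a k) / (1 - (starRingEnd ℂ) (a k) * w)) z *
        (lam * ∏ k, (z - b k) / (1 - (starRingEnd ℂ) (b k) * z)) -
      (mu * ∏ k, (z - a k) / (1 - (starRingEnd ℂ) (a k) * z)) *
        deriv (fun w => lam * ∏ k, (w - b k) / (1 - (starRingEnd ℂ) (b k) * w)) z)
      = (mu * ∏ k, (z - a k) / (1 - (starRingEnd ℂ) (a k) * z)) *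
        (lam * ∏ k, (z - b k) / (1 - (starRingEnd ℂ) (b k) * z)) * ((SA c - SB c : ℝ) : ℂ) := by
    push_cast
    linear_combination (lam * ∏ k, (z - b k) / (1 - (starRingEnd ℂ) (b k) * z)) * hdA -
      (mu * ∏ k, (z - a k) / (1 - (starRingEnd ℂ) (a k) * z)) * hdB
  rw [hSc] at hmain
  simp only [Complex.ofReal_zero, mul_zero] at hmain
  rcases mul_eq_zero.mp hmain with h | h
  · exact absurd h hzne
  · exact h
end

section
/- Lemniscates are trajectories of the associated quadratic differential: let f : ℂ → ℂ, γ : ℝ → ℂ, t₀ ∈ ℝ, and c > 0. Assume f is complex-differentiable at γ(t₀), γ is differentiable at t₀, |f(γ(t))| = c for all t in some neighborhood of t₀, and moreover γ'(t₀) ≠ 0 and f'(γ(t₀)) ≠ 0. Then the complex number −(1/(4π²))·( (f'(γ(t₀))/f(γ(t₀))) · γ'(t₀) )² is a positive real number; that is, Q_f(γ(t₀))·(γ'(t₀))² > 0, so the arc γ is tangent at t₀ to a trajectory of the quadratic differential Q_f. -/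
open Complex

/-- Lemniscates are trajectories of the quadratic differential
`Q_f(z)dz² = −(1/(4π²))·(f'(z)/f(z))²·dz²`: along a differentiable arc lying in
a level set of `|f|` with nonvanishing tangent and `f' ≠ 0`, the quantity
`Q_f(γ(t₀))·(γ'(t₀))²` is a positive real number. -/
theorem lemniscate_is_trajectory (f : ℂ → ℂ) (γ : ℝ → ℂ) (t₀ : ℝ) (c : ℝ)
    (hc : 0 < c)
    (hf : DifferentiableAt ℂ f (γ t₀)) (hγ : DifferentiableAt ℝ γ t₀)
    (hlevel : ∀ᶠ t in nhds t₀, ‖f (γ t)‖ = c)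
    (hγ' : deriv γ t₀ ≠ 0) (hf' : deriv f (γ t₀) ≠ 0) :
    ∃ r : ℝ, 0 < r ∧
      -(1 / (4 * (Real.pi : ℂ) ^ 2)) *
        ((deriv f (γ t₀) / f (γ t₀)) * deriv γ t₀) ^ 2 = (r : ℂ) := by
  set F₀ := f (γ t₀) with hF₀def
  have hnorm : ‖F₀‖ = c := hlevel.self_of_nhds
  have hF₀ : F₀ ≠ 0 := by
    intro h
    rw [h, norm_zero] at hnorm
    exact hc.ne' hnorm.symm
  set w₀ := deriv f (γ t₀) * deriv γ t₀ with hw₀def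
  have hw₀ : w₀ ≠ 0 := mul_ne_zero hf' hγ'
  -- derivative of t ↦ f (γ t)
  have hFd : HasDerivAt (fun t => f (γ t)) w₀ t₀ := by
    have := (hf.hasFDerivAt.restrictScalars ℝ).comp_hasDerivAt t₀ hγ.hasDerivAt
    simpa [hw₀def, mul_comm, Function.comp_def] using this
  -- derivative of the conjugate
  have hCd : HasDerivAt (fun t => (starRingEnd ℂ) (f (γ t))) ((starRingEnd ℂ) w₀) t₀ := by
    have := Complex.conjCLE.hasFDerivAt.comp_hasDerivAt t₀ hFd
    simpa [Function.comp_def] using this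
  have hprod : HasDerivAt (fun t => f (γ t) * (starRingEnd ℂ) (f (γ t)))
      (w₀ * (starRingEnd ℂ) F₀ + F₀ * (starRingEnd ℂ) w₀) t₀ := hFd.mul hCd
  have heq : (fun t => f (γ t) * (starRingEnd ℂ) (f (γ t))) =ᶠ[nhds t₀]
      (fun _ => ((c ^ 2 : ℝ) : ℂ)) := by
    filter_upwards [hlevel] with t ht
    simp [Complex.mul_conj, Complex.normSq_eq_norm_sq, ht]
  have hzero : w₀ * (starRingEnd ℂ) F₀ + F₀ * (starRingEnd ℂ) w₀ = 0 := by
    have h1 : HasDerivAt (fun _ : ℝ => ((c ^ 2 : ℝ) : ℂ))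
        (w₀ * (starRingEnd ℂ) F₀ + F₀ * (starRingEnd ℂ) w₀) t₀ :=
      hprod.congr_of_eventuallyEq heq.symm
    exact h1.unique (hasDerivAt_const _ _)
  set u := w₀ * (starRingEnd ℂ) F₀ with hudef
  have hure : u.re = 0 := by
    have hcu : (starRingEnd ℂ) u = F₀ * (starRingEnd ℂ) w₀ := by
      rw [hudef, map_mul, Complex.conj_conj]; ring
    have h2 : u + (starRingEnd ℂ) u = 0 := by rw [hcu]; exact hzero
    have h3 : ((2 * u.re : ℝ) : ℂ) = 0 := by rw [← Complex.add_conj]; exact h2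
    have h4 : 2 * u.re = 0 := by exact_mod_cast h3
    linarith
  set w := deriv f (γ t₀) / F₀ * deriv γ t₀ with hwdef
  have hnsq : (Complex.normSq F₀ : ℂ) ≠ 0 := by
    exact_mod_cast (Complex.normSq_pos.2 hF₀).ne'
  have hw : w = u / ((Complex.normSq F₀ : ℝ) : ℂ) := by
    rw [hwdef, hudef, hw₀def, eq_div_iff hnsq]
    rw [← Complex.mul_conj]
    field_simp
  have hwre : w.re = 0 := by
    rw [hw, Complex.div_ofReal_re, hure, zero_div]
  have hwne : w ≠ 0 := by
    rw [hwdef]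
    exact mul_ne_zero (div_ne_zero hf' hF₀) hγ'
  have hwim : w.im ≠ 0 := by
    intro h
    exact hwne (Complex.ext hwre h)
  have hwI : w = (w.im : ℂ) * Complex.I := by
    apply Complex.ext <;> simp [hwre]
  refine ⟨w.im ^ 2 / (4 * Real.pi ^ 2), by positivity, ?_⟩
  have hπ : (Real.pi : ℂ) ≠ 0 := by exact_mod_cast Real.pi_ne_zero
  rw [hwI]
  push_cast
  field_simp
  ring_nf
  simp [Complex.I_sq]
end
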